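/- arXiv:2604.28033 — 4 statements merged into one kernel-verified Lean document; each statement's English description precedes it below -/
import Mathlib

section
/- Let G be the graph θ_n^1(3,3)-type graph where a ≥ 1 leaves are attached to u and b ≥ 1 leaves to v with a + b = k = n − 4. Then G has exactly ab + 2a + 2b + 3 maximal matchings, of which exactly one has size 1 and all others size 2, so avm(G) = 2 − 1/(ab + 2k + 3). -/
open scoped Classical

/-- `M` is a matching of `G`, viewed as a finite set of edges. -/
def IsMatchingSet {V : Type*} (G : SimpleGraph V) (M : Finset (Sym2 V)) : Prop :=
  (M : Set (Sym2 V)) ⊆ G.edgeSet ∧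
    (M : Set (Sym2 V)).Pairwise fun e f => ∀ v : V, ¬(v ∈ e ∧ v ∈ f)

/-- `M` is a maximal matching of `G`. -/
def IsMaximalMatching {V : Type*} (G : SimpleGraph V) (M : Finset (Sym2 V)) : Prop :=
  IsMatchingSet G M ∧ ∀ N : Finset (Sym2 V), IsMatchingSet G N → M ⊆ N → N = M

/-- The finite set of all maximal matchings of a finite graph. -/
noncomputable def maximalMatchings {V : Type*} [Fintype V] [DecidableEq V]
    (G : SimpleGraph V) : Finset (Finset (Sym2 V)) :=
  G.edgeFinset.powerset.filter fun M => IsMaximalMatching G M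

/-- The average size of a maximal matching of `G`. -/
noncomputable def avm {V : Type*} [Fintype V] [DecidableEq V] (G : SimpleGraph V) : ℚ :=
  (∑ M ∈ maximalMatchings G, (M.card : ℚ)) / ((maximalMatchings G).card : ℚ)

/-- The θ-type graph on `n` vertices: core `0 = u`, `1 = v`, `2 = x`, `3 = y` with
edges `uv, ux, xv, uy, yv`; vertices `4, …, 3 + a` are leaves attached to `u`, and
vertices `4 + a, …, n - 1` are leaves attached to `v`. -/
def thetaSplit (n a : ℕ) : SimpleGraph (Fin n) :=
  SimpleGraph.fromRel fun x y =>
    ((x : ℕ) = 0 ∧ (y : ℕ) = 1) ∨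
    ((x : ℕ) = 0 ∧ (y : ℕ) = 2) ∨ ((x : ℕ) = 2 ∧ (y : ℕ) = 1) ∨
    ((x : ℕ) = 0 ∧ (y : ℕ) = 3) ∨ ((x : ℕ) = 3 ∧ (y : ℕ) = 1) ∨
    ((x : ℕ) = 0 ∧ 4 ≤ (y : ℕ) ∧ (y : ℕ) < 4 + a) ∨
    ((x : ℕ) = 1 ∧ 4 + a ≤ (y : ℕ))

namespace ThetaAux

lemma mem_mm_iff {V : Type*} [Fintype V] [DecidableEq V] (G : SimpleGraph V)
    (M : Finset (Sym2 V)) : M ∈ maximalMatchings G ↔ IsMaximalMatching G M := by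
  constructor
  · intro h
    exact (Finset.mem_filter.mp h).2
  · intro h
    refine Finset.mem_filter.mpr ⟨Finset.mem_powerset.mpr fun e he => ?_, h⟩
    rw [SimpleGraph.mem_edgeFinset]
    exact h.1.1 he

lemma touch {n a : ℕ} {x y : Fin n} (h : (thetaSplit n a).Adj x y) :
    (x : ℕ) = 0 ∨ (x : ℕ) = 1 ∨ (y : ℕ) = 0 ∨ (y : ℕ) = 1 := by
  simp only [thetaSplit, SimpleGraph.fromRel_adj] at h
  omega

lemma adj_zero {n a : ℕ} (h0 : 0 < n) (w : Fin n) :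
    (thetaSplit n a).Adj ⟨0, h0⟩ w ↔
      ((w : ℕ) = 1 ∨ (w : ℕ) = 2 ∨ (w : ℕ) = 3 ∨ (4 ≤ (w : ℕ) ∧ (w : ℕ) < 4 + a)) := by
  simp only [thetaSplit, SimpleGraph.fromRel_adj, ne_eq, Fin.ext_iff, Fin.val_mk,
    true_and, and_true]
  omega

lemma adj_one {n a : ℕ} (h1 : 1 < n) (z : Fin n) :
    (thetaSplit n a).Adj ⟨1, h1⟩ z ↔
      ((z : ℕ) = 0 ∨ (z : ℕ) = 2 ∨ (z : ℕ) = 3 ∨ 4 + a ≤ (z : ℕ)) := by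
  simp only [thetaSplit, SimpleGraph.fromRel_adj, ne_eq, Fin.ext_iff, Fin.val_mk,
    true_and, and_true]
  omega

lemma edge_touch {n a : ℕ} (h1 : 1 < n) {e : Sym2 (Fin n)}
    (he : e ∈ (thetaSplit n a).edgeSet) :
    (⟨0, by omega⟩ : Fin n) ∈ e ∨ (⟨1, h1⟩ : Fin n) ∈ e := by
  induction e using Sym2.ind with
  | _ x y =>
    rw [SimpleGraph.mem_edgeSet] at he
    rcases touch he with h | h | h | h
    · exact Or.inl (by rw [show x = (⟨0, by omega⟩ : Fin n) from Fin.ext h]; exact Sym2.mem_mk_left _ _)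
    · exact Or.inr (by rw [show x = (⟨1, h1⟩ : Fin n) from Fin.ext h]; exact Sym2.mem_mk_left _ _)
    · exact Or.inl (by rw [show y = (⟨0, by omega⟩ : Fin n) from Fin.ext h]; exact Sym2.mem_mk_right _ _)
    · exact Or.inr (by rw [show y = (⟨1, h1⟩ : Fin n) from Fin.ext h]; exact Sym2.mem_mk_right _ _)

/-- If a matching `M` contains an edge through `u = 0` and an edge through `v = 1`,
then `M` is a maximal matching. -/
lemma max_of_sat {n a : ℕ} (h1 : 1 < n) (M : Finset (Sym2 (Fin n)))
    (e1 e2 : Sym2 (Fin n)) (he1 : e1 ∈ M) (he2 : e2 ∈ M)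
    (hu : (⟨0, by omega⟩ : Fin n) ∈ e1) (hv : (⟨1, h1⟩ : Fin n) ∈ e2) :
    ∀ N : Finset (Sym2 (Fin n)), IsMatchingSet (thetaSplit n a) N → M ⊆ N → N = M := by
  intro N hN hMN
  refine Finset.Subset.antisymm (fun f hf => ?_) hMN
  rcases edge_touch h1 (hN.1 hf) with h | h
  · by_cases hfe : f = e1
    · exact hfe ▸ he1
    · exact absurd ⟨h, hu⟩ (hN.2 hf (hMN he1) hfe _)
  · by_cases hfe : f = e2
    · exact hfe ▸ he2
    · exact absurd ⟨h, hv⟩ (hN.2 hf (hMN he2) hfe _)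

end ThetaAux

namespace ThetaAux

def fm (n : ℕ) (h : 0 < n) (m : ℕ) : Fin n := ⟨m % n, Nat.mod_lt m h⟩

lemma fm_val {n : ℕ} (h : 0 < n) {m : ℕ} (hm : m < n) : ((fm n h m : Fin n) : ℕ) = m :=
  Nat.mod_eq_of_lt hm

lemma fm_eq {n : ℕ} (h : 0 < n) {m : ℕ} (hm : m < n) : fm n h m = ⟨m, hm⟩ :=
  Fin.ext (Nat.mod_eq_of_lt hm)

def An (a : ℕ) : Finset ℕ := insert 2 (insert 3 (Finset.Ico 4 (4 + a)))

def Bn (n a : ℕ) : Finset ℕ := insert 2 (insert 3 (Finset.Ico (4 + a) n))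

lemma mem_An {a m : ℕ} : m ∈ An a ↔ m = 2 ∨ m = 3 ∨ (4 ≤ m ∧ m < 4 + a) := by
  simp [An, Finset.mem_insert, Finset.mem_Ico]

lemma mem_Bn {n a m : ℕ} : m ∈ Bn n a ↔ m = 2 ∨ m = 3 ∨ (4 + a ≤ m ∧ m < n) := by
  simp [Bn, Finset.mem_insert, Finset.mem_Ico]

def Pp (n a : ℕ) : Finset (ℕ × ℕ) := (An a ×ˢ Bn n a).filter fun p => p.1 ≠ p.2

noncomputable def gg (n a : ℕ) (h : 0 < n) (p : ℕ × ℕ) : Finset (Sym2 (Fin n)) :=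
  {s(fm n h 0, fm n h p.1), s(fm n h 1, fm n h p.2)}

noncomputable def thT (n a : ℕ) (h : 0 < n) : Finset (Finset (Sym2 (Fin n))) :=
  insert {s(fm n h 0, fm n h 1)} ((Pp n a).image (gg n a h))

lemma card_An (a : ℕ) : (An a).card = a + 2 := by
  rw [An, Finset.card_insert_of_notMem (by simp [Finset.mem_insert, Finset.mem_Ico]),
    Finset.card_insert_of_notMem (by simp [Finset.mem_Ico]), Nat.card_Ico]
  omega

lemma card_Bn {n a b : ℕ} (hn4 : n = a + b + 4) : (Bn n a).card = b + 2 := by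
  rw [Bn, Finset.card_insert_of_notMem (by simp [Finset.mem_insert, Finset.mem_Ico]; omega),
    Finset.card_insert_of_notMem (by simp [Finset.mem_Ico]; omega), Nat.card_Ico]
  omega

lemma card_Pp {n a b : ℕ} (hn4 : n = a + b + 4) : (Pp n a).card = (a + 2) * (b + 2) - 2 := by
  have hsplit := Finset.card_filter_add_card_filter_not
    (s := An a ×ˢ Bn n a) (p := fun p => p.1 = p.2)
  have heq : (An a ×ˢ Bn n a).filter (fun p => p.1 = p.2) = {(2, 2), (3, 3)} := by
    ext ⟨p1, p2⟩
    simp only [Finset.mem_filter, Finset.mem_product, mem_An, mem_Bn, Finset.mem_insert,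
      Finset.mem_singleton, Prod.mk.injEq]
    omega
  have hcard2 : ((An a ×ˢ Bn n a).filter (fun p => p.1 = p.2)).card = 2 := by
    rw [heq]; decide
  have hprod : (An a ×ˢ Bn n a).card = (a + 2) * (b + 2) := by
    rw [Finset.card_product, card_An, card_Bn hn4]
  have : (Pp n a).card = ((An a ×ˢ Bn n a).filter (fun p => ¬p.1 = p.2)).card := rfl
  omega

end ThetaAux

namespace ThetaAux

lemma bounds_Pp {n a b : ℕ} (hn4 : n = a + b + 4) {p : ℕ × ℕ} (hp : p ∈ Pp n a) :
    p.1 < n ∧ p.2 < n ∧ 2 ≤ p.1 ∧ 2 ≤ p.2 ∧ p.1 ≠ p.2 := by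
  obtain ⟨hp1, hp2⟩ := Finset.mem_filter.mp hp
  obtain ⟨h1, h2⟩ := Finset.mem_product.mp hp1
  rw [mem_An] at h1; rw [mem_Bn] at h2
  omega

lemma gg_ne {n a b : ℕ} (hn4 : n = a + b + 4) (h : 0 < n) {p : ℕ × ℕ} (hp : p ∈ Pp n a) :
    s(fm n h 0, fm n h p.1) ≠ s(fm n h 1, fm n h p.2) := by
  obtain ⟨hb1, hb2, hc1, hc2, hne⟩ := bounds_Pp hn4 hp
  intro hcon
  rw [Sym2.eq_iff] at hcon
  rcases hcon with ⟨h01, -⟩ | ⟨h0p, -⟩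
  · have := congrArg Fin.val h01
    rw [fm_val h (by omega), fm_val h (by omega)] at this
    omega
  · have := congrArg Fin.val h0p
    rw [fm_val h (by omega), fm_val h hb2] at this
    omega

lemma card_gg {n a b : ℕ} (hn4 : n = a + b + 4) (h : 0 < n) {p : ℕ × ℕ} (hp : p ∈ Pp n a) :
    (gg n a h p).card = 2 := by
  rw [gg, Finset.card_insert_of_notMem (by simp [gg_ne hn4 h hp]), Finset.card_singleton]

lemma injOn_gg {n a b : ℕ} (hn4 : n = a + b + 4) (h : 0 < n) :
    ∀ p ∈ Pp n a, ∀ q ∈ Pp n a, gg n a h p = gg n a h q → p = q := by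
  intro p hp q hq heq
  obtain ⟨hpb1, hpb2, hpc1, hpc2, -⟩ := bounds_Pp hn4 hp
  obtain ⟨hqb1, hqb2, hqc1, hqc2, -⟩ := bounds_Pp hn4 hq
  have h0 : ((fm n h 0 : Fin n) : ℕ) = 0 := fm_val h (by omega)
  have h1 : ((fm n h 1 : Fin n) : ℕ) = 1 := fm_val h (by omega)
  have hm1 : s(fm n h 0, fm n h p.1) ∈ gg n a h q := by
    rw [← heq]; exact Finset.mem_insert_self _ _
  have hm2 : s(fm n h 1, fm n h p.2) ∈ gg n a h q := by
    rw [← heq]; exact Finset.mem_insert.mpr (Or.inr (Finset.mem_singleton_self _))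
  rw [gg, Finset.mem_insert, Finset.mem_singleton, Sym2.eq_iff, Sym2.eq_iff] at hm1 hm2
  have e1 : p.1 = q.1 := by
    rcases hm1 with (⟨-, hx⟩ | ⟨hx, hy⟩) | (⟨hx, -⟩ | ⟨hx, -⟩)
    · have := congrArg Fin.val hx
      rwa [fm_val h hpb1, fm_val h hqb1] at this
    · have := congrArg Fin.val hx
      rw [h0, fm_val h hqb1] at this; omega
    · have := congrArg Fin.val hx
      rw [h0, h1] at this; omega
    · have := congrArg Fin.val hx
      rw [h0, fm_val h hqb2] at this; omega
  have e2 : p.2 = q.2 := by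
    rcases hm2 with (⟨hx, -⟩ | ⟨hx, -⟩) | (⟨-, hx⟩ | ⟨hx, hy⟩)
    · have := congrArg Fin.val hx
      rw [h0, h1] at this; omega
    · have := congrArg Fin.val hx
      rw [h1, fm_val h hqb1] at this; omega
    · have := congrArg Fin.val hx
      rwa [fm_val h hpb2, fm_val h hqb2] at this
    · have := congrArg Fin.val hx
      rw [h1, fm_val h hqb2] at this; omega
  exact Prod.ext e1 e2

lemma uv_not_mem {n a b : ℕ} (hn4 : n = a + b + 4) (h : 0 < n) :
    ({s(fm n h 0, fm n h 1)} : Finset (Sym2 (Fin n))) ∉ (Pp n a).image (gg n a h) := by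
  intro hmem
  obtain ⟨p, hp, heq⟩ := Finset.mem_image.mp hmem
  have := card_gg hn4 h hp
  rw [heq] at this
  simp at this

lemma card_thT {n a b : ℕ} (hn4 : n = a + b + 4) (h : 0 < n) :
    (thT n a h).card = (a + 2) * (b + 2) - 1 := by
  rw [thT, Finset.card_insert_of_notMem (uv_not_mem hn4 h),
    Finset.card_image_of_injOn (injOn_gg hn4 h), card_Pp hn4]
  have : 4 ≤ (a + 2) * (b + 2) := by nlinarith
  omega

end ThetaAux

namespace ThetaAux

lemma mm_eq {n a b : ℕ} (hb : 1 ≤ b) (hn4 : n = a + b + 4) (h : 0 < n) :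
    maximalMatchings (thetaSplit n a) = thT n a h := by
  have h0 : 0 < n := h
  have h1 : 1 < n := by omega
  have hfm0 : fm n h 0 = (⟨0, h0⟩ : Fin n) := fm_eq h h0
  have hfm1 : fm n h 1 = (⟨1, h1⟩ : Fin n) := fm_eq h h1
  ext M
  rw [mem_mm_iff]
  constructor
  · rintro ⟨⟨hsub, hpair⟩, hmax⟩
    by_cases huv : s((⟨0, h0⟩ : Fin n), (⟨1, h1⟩ : Fin n)) ∈ M
    · have hM1 : M = {s((⟨0, h0⟩ : Fin n), (⟨1, h1⟩ : Fin n))} := by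
        refine Finset.eq_singleton_iff_unique_mem.mpr ⟨huv, fun e he => ?_⟩
        by_contra hne
        rcases edge_touch h1 (hsub he) with hh | hh
        · exact hpair he huv hne _ ⟨hh, Sym2.mem_mk_left _ _⟩
        · exact hpair he huv hne _ ⟨hh, Sym2.mem_mk_right _ _⟩
      rw [thT, hfm0, hfm1, hM1]
      exact Finset.mem_insert_self _ _
    · have hexv : ∃ e ∈ M, (⟨1, h1⟩ : Fin n) ∈ e := by
        by_contra hcon
        push_neg at hcon
        have hallu : ∀ e ∈ M, (⟨0, h0⟩ : Fin n) ∈ e := fun e he =>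
          (edge_touch h1 (hsub he)).resolve_right (hcon e he)
        rcases Finset.eq_empty_or_nonempty M with hME | ⟨e, he⟩
        · have hmatch : IsMatchingSet (thetaSplit n a)
              {s((⟨0, h0⟩ : Fin n), (⟨1, h1⟩ : Fin n))} := by
            constructor
            · intro f hf
              rw [Finset.coe_singleton, Set.mem_singleton_iff] at hf
              subst hf
              rw [SimpleGraph.mem_edgeSet, adj_zero]
              simp
            · rw [Finset.coe_singleton]
              exact Set.pairwise_singleton _ _
          have := hmax _ hmatch (by rw [hME]; exact Finset.empty_subset _)
          rw [hME] at this
          simpa using this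
        · have hMe : ∀ f ∈ M, f = e := by
            intro f hf
            by_contra hne
            exact hpair hf he hne _ ⟨hallu f hf, hallu e he⟩
          obtain ⟨w, hw⟩ := Sym2.mem_iff_exists.mp (hallu e he)
          have hwv : w ≠ ⟨1, h1⟩ := by
            intro hc
            apply huv
            rw [← hc, ← hw]
            exact he
          have hadjw : (thetaSplit n a).Adj ⟨0, h0⟩ w := by
            rw [← SimpleGraph.mem_edgeSet, ← hw]
            exact hsub he
          have hwval := (adj_zero h0 w).mp hadjw
          have hwv' : (w : ℕ) ≠ 1 := fun hc => hwv (Fin.ext hc)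
          set z : Fin n := if (w : ℕ) = 2 then ⟨3, by omega⟩ else ⟨2, by omega⟩ with hzdef
          have hz23 : (z : ℕ) = 2 ∨ (z : ℕ) = 3 := by
            rw [hzdef]; split <;> simp
          have hzw : (z : ℕ) ≠ (w : ℕ) := by
            rw [hzdef]; split
            next hcase => simp only [Fin.val_mk]; omega
            next hcase => simp only [Fin.val_mk]; omega
          have hadjz : (thetaSplit n a).Adj ⟨1, h1⟩ z := (adj_one h1 z).mpr (by omega)
          have hnomatch : IsMatchingSet (thetaSplit n a)
              (insert s((⟨1, h1⟩ : Fin n), z) M) := by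
            constructor
            · intro f hf
              rw [Finset.coe_insert, Set.mem_insert_iff] at hf
              rcases hf with rfl | hf
              · exact (SimpleGraph.mem_edgeSet _).mpr hadjz
              · exact hsub hf
            · rw [Finset.coe_insert]
              refine Set.pairwise_insert.mpr ⟨hpair, fun f hf hne => ?_⟩
              have hfe := hMe f hf
              subst hfe
              have key : ∀ c : Fin n, ¬(c ∈ s((⟨1, h1⟩ : Fin n), z) ∧ c ∈ f) := by
                rw [hw]
                intro c ⟨hc1, hc2⟩
                rw [Sym2.mem_iff] at hc1 hc2
                have hcv : (c : ℕ) = 1 ∨ (c : ℕ) = (z : ℕ) := by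
                  rcases hc1 with rfl | rfl
                  · left; rfl
                  · right; rfl
                have hcu : (c : ℕ) = 0 ∨ (c : ℕ) = (w : ℕ) := by
                  rcases hc2 with rfl | rfl
                  · left; rfl
                  · right; rfl
                omega
              exact ⟨key, fun c hc => key c ⟨hc.2, hc.1⟩⟩
          have hNM := hmax _ hnomatch (Finset.subset_insert _ _)
          have : s((⟨1, h1⟩ : Fin n), z) ∈ M := by
            rw [← hNM]; exact Finset.mem_insert_self _ _
          exact hcon _ this (Sym2.mem_mk_left _ _)
      obtain ⟨e2, he2, hv2⟩ := hexv
      have hexu : ∃ e ∈ M, (⟨0, h0⟩ : Fin n) ∈ e := by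
        by_contra hcon
        push_neg at hcon
        have hallv : ∀ e ∈ M, (⟨1, h1⟩ : Fin n) ∈ e := fun e he =>
          (edge_touch h1 (hsub he)).resolve_left (hcon e he)
        have hMe : ∀ f ∈ M, f = e2 := by
          intro f hf
          by_contra hne
          exact hpair hf he2 hne _ ⟨hallv f hf, hallv e2 he2⟩
        obtain ⟨z', hz'⟩ := Sym2.mem_iff_exists.mp hv2
        have hz'u : z' ≠ ⟨0, h0⟩ := by
          intro hc
          apply huv
          have he2' : e2 = s((⟨0, h0⟩ : Fin n), (⟨1, h1⟩ : Fin n)) := by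
            rw [hz', hc, Sym2.eq_swap]
          rw [← he2']; exact he2
        have hadjz' : (thetaSplit n a).Adj ⟨1, h1⟩ z' := by
          rw [← SimpleGraph.mem_edgeSet, ← hz']
          exact hsub he2
        have hzval := (adj_one h1 z').mp hadjz'
        have hz'u' : (z' : ℕ) ≠ 0 := fun hc => hz'u (Fin.ext hc)
        set w : Fin n := if (z' : ℕ) = 2 then ⟨3, by omega⟩ else ⟨2, by omega⟩ with hwdef
        have hw23 : (w : ℕ) = 2 ∨ (w : ℕ) = 3 := by
          rw [hwdef]; split <;> simp
        have hwz : (w : ℕ) ≠ (z' : ℕ) := by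
          rw [hwdef]; split
          next hcase => simp only [Fin.val_mk]; omega
          next hcase => simp only [Fin.val_mk]; omega
        have hadjw : (thetaSplit n a).Adj ⟨0, h0⟩ w := (adj_zero h0 w).mpr (by omega)
        have hnomatch : IsMatchingSet (thetaSplit n a)
            (insert s((⟨0, h0⟩ : Fin n), w) M) := by
          constructor
          · intro f hf
            rw [Finset.coe_insert, Set.mem_insert_iff] at hf
            rcases hf with rfl | hf
            · exact (SimpleGraph.mem_edgeSet _).mpr hadjw
            · exact hsub hf
          · rw [Finset.coe_insert]
            refine Set.pairwise_insert.mpr ⟨hpair, fun f hf hne => ?_⟩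
            have hfe := hMe f hf
            subst hfe
            have key : ∀ c : Fin n, ¬(c ∈ s((⟨0, h0⟩ : Fin n), w) ∧ c ∈ f) := by
              rw [hz']
              intro c ⟨hc1, hc2⟩
              rw [Sym2.mem_iff] at hc1 hc2
              have hcu : (c : ℕ) = 0 ∨ (c : ℕ) = (w : ℕ) := by
                rcases hc1 with rfl | rfl
                · left; rfl
                · right; rfl
              have hcv : (c : ℕ) = 1 ∨ (c : ℕ) = (z' : ℕ) := by
                rcases hc2 with rfl | rfl
                · left; rfl
                · right; rfl
              omega
            exact ⟨key, fun c hc => key c ⟨hc.2, hc.1⟩⟩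
        have hNM := hmax _ hnomatch (Finset.subset_insert _ _)
        have : s((⟨0, h0⟩ : Fin n), w) ∈ M := by
          rw [← hNM]; exact Finset.mem_insert_self _ _
        exact hcon _ this (Sym2.mem_mk_left _ _)
      obtain ⟨e1, he1, hu1⟩ := hexu
      have he12 : e1 ≠ e2 := by
        intro hc
        subst hc
        obtain ⟨w, hw⟩ := Sym2.mem_iff_exists.mp hu1
        rw [hw, Sym2.mem_iff] at hv2
        rcases hv2 with hc2 | hc2
        · exact absurd (congrArg Fin.val hc2) (by simp)
        · apply huv
          rw [← hc2] at hw
          rw [← hw]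
          exact he1
      obtain ⟨w, hw⟩ := Sym2.mem_iff_exists.mp hu1
      obtain ⟨z, hz⟩ := Sym2.mem_iff_exists.mp hv2
      have hadjw : (thetaSplit n a).Adj ⟨0, h0⟩ w := by
        rw [← SimpleGraph.mem_edgeSet, ← hw]; exact hsub he1
      have hadjz : (thetaSplit n a).Adj ⟨1, h1⟩ z := by
        rw [← SimpleGraph.mem_edgeSet, ← hz]; exact hsub he2
      have hwv : (w : ℕ) ≠ 1 := by
        intro hc
        apply huv
        have hwe : w = (⟨1, h1⟩ : Fin n) := Fin.ext hc
        rw [← hwe, ← hw]; exact he1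
      have hzu : (z : ℕ) ≠ 0 := by
        intro hc
        apply huv
        have hze : z = (⟨0, h0⟩ : Fin n) := Fin.ext hc
        rw [hze, Sym2.eq_swap] at hz
        rw [← hz]; exact he2
      have hwz : (w : ℕ) ≠ (z : ℕ) := by
        intro hc
        have hweq : w = z := Fin.ext hc
        apply hpair he1 he2 he12 w
        constructor
        · rw [hw]; exact Sym2.mem_mk_right _ _
        · rw [hz, hweq]; exact Sym2.mem_mk_right _ _
      have hwAn : (w : ℕ) ∈ An a := by
        have := (adj_zero h0 w).mp hadjw
        rw [mem_An]; omega
      have hzBn : (z : ℕ) ∈ Bn n a := by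
        have h2 := (adj_one h1 z).mp hadjz
        have h3 := z.isLt
        rw [mem_Bn]; omega
      have hM2 : M = {e1, e2} := by
        refine Finset.Subset.antisymm (fun f hf => ?_) ?_
        · rcases edge_touch h1 (hsub hf) with hh | hh
          · have hfe : f = e1 := by
              by_contra hne
              exact hpair hf he1 hne _ ⟨hh, hu1⟩
            rw [hfe]; exact Finset.mem_insert_self _ _
          · have hfe : f = e2 := by
              by_contra hne
              exact hpair hf he2 hne _ ⟨hh, hv2⟩
            rw [hfe]; exact Finset.mem_insert.mpr (Or.inr (Finset.mem_singleton_self _))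
        · rw [Finset.insert_subset_iff, Finset.singleton_subset_iff]
          exact ⟨he1, he2⟩
      rw [thT]
      refine Finset.mem_insert.mpr (Or.inr (Finset.mem_image.mpr
        ⟨((w : ℕ), (z : ℕ)), ?_, ?_⟩))
      · rw [Pp, Finset.mem_filter, Finset.mem_product]
        exact ⟨⟨hwAn, hzBn⟩, hwz⟩
      · rw [gg, hM2, hw, hz, hfm0, hfm1]
        have hfw : fm n h (w : ℕ) = w := by rw [fm_eq h w.isLt]
        have hfz : fm n h (z : ℕ) = z := by rw [fm_eq h z.isLt]
        rw [hfw, hfz]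
  · intro hM
    rw [thT, hfm0, hfm1, Finset.mem_insert] at hM
    rcases hM with rfl | hM
    · constructor
      · constructor
        · intro f hf
          rw [Finset.coe_singleton, Set.mem_singleton_iff] at hf
          subst hf
          rw [SimpleGraph.mem_edgeSet, adj_zero]
          simp
        · rw [Finset.coe_singleton]
          exact Set.pairwise_singleton _ _
      · intro N hN hMN
        exact max_of_sat h1 _ _ _ (Finset.mem_singleton_self _) (Finset.mem_singleton_self _)
          (Sym2.mem_mk_left _ _) (Sym2.mem_mk_right _ _) N hN hMN
    · obtain ⟨p, hp, rfl⟩ := Finset.mem_image.mp hM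
      obtain ⟨hpb1, hpb2, hpc1, hpc2, hpne⟩ := bounds_Pp hn4 hp
      obtain ⟨hp', hpne'⟩ := Finset.mem_filter.mp hp
      obtain ⟨hpA, hpB⟩ := Finset.mem_product.mp hp'
      rw [mem_An] at hpA
      rw [mem_Bn] at hpB
      have hfp1 : ((fm n h p.1 : Fin n) : ℕ) = p.1 := fm_val h hpb1
      have hfp2 : ((fm n h p.2 : Fin n) : ℕ) = p.2 := fm_val h hpb2
      have hadj1 : (thetaSplit n a).Adj ⟨0, h0⟩ (fm n h p.1) :=
        (adj_zero h0 _).mpr (by omega)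
      have hadj2 : (thetaSplit n a).Adj ⟨1, h1⟩ (fm n h p.2) :=
        (adj_one h1 _).mpr (by omega)
      have key : ∀ c : Fin n, ¬(c ∈ s(fm n h 0, fm n h p.1) ∧ c ∈ s(fm n h 1, fm n h p.2)) := by
        intro c ⟨hc1, hc2⟩
        rw [Sym2.mem_iff] at hc1 hc2
        have k1 : (c : ℕ) = 0 ∨ (c : ℕ) = p.1 := by
          rcases hc1 with rfl | rfl
          · left; exact fm_val h h0
          · right; exact hfp1
        have k2 : (c : ℕ) = 1 ∨ (c : ℕ) = p.2 := by
          rcases hc2 with rfl | rfl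
          · left; exact fm_val h h1
          · right; exact hfp2
        omega
      constructor
      · constructor
        · intro f hf
          rw [gg, Finset.coe_insert, Set.mem_insert_iff, Finset.coe_singleton,
            Set.mem_singleton_iff] at hf
          rcases hf with rfl | rfl
          · rw [SimpleGraph.mem_edgeSet, hfm0]; exact hadj1
          · rw [SimpleGraph.mem_edgeSet, hfm1]; exact hadj2
        · rw [gg, Finset.coe_insert, Finset.coe_singleton]
          refine Set.pairwise_insert.mpr ⟨Set.pairwise_singleton _ _, ?_⟩
          intro f hf hne
          rw [Set.mem_singleton_iff] at hf
          subst hf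
          exact ⟨key, fun c hc => key c ⟨hc.2, hc.1⟩⟩
      · intro N hN hMN
        refine max_of_sat h1 _ s(fm n h 0, fm n h p.1) s(fm n h 1, fm n h p.2)
          ?_ ?_ ?_ ?_ N hN hMN
        · rw [gg]; exact Finset.mem_insert_self _ _
        · rw [gg]; exact Finset.mem_insert.mpr (Or.inr (Finset.mem_singleton_self _))
        · rw [hfm0]; exact Sym2.mem_mk_left _ _
        · rw [hfm1]; exact Sym2.mem_mk_left _ _

end ThetaAux

open ThetaAux in
theorem stmt2 (n a b : ℕ) (ha : 1 ≤ a) (hb : 1 ≤ b) (hab : a + b = n - 4)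
    (hn : 5 ≤ n) :
    (maximalMatchings (thetaSplit n a)).card = a * b + 2 * a + 2 * b + 3 ∧
    ((maximalMatchings (thetaSplit n a)).filter fun M => M.card = 1).card = 1 ∧
    (∀ M ∈ maximalMatchings (thetaSplit n a), M.card ≠ 1 → M.card = 2) ∧
    avm (thetaSplit n a) = 2 - 1 / ((a : ℚ) * b + 2 * (a + b) + 3) := by
  have hn4 : n = a + b + 4 := by omega
  have h : 0 < n := by omega
  have hmm := mm_eq hb hn4 h
  have hK : (a + 2) * (b + 2) = a * b + 2 * a + 2 * b + 4 := by ring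
  have hPp : (Pp n a).card = a * b + 2 * a + 2 * b + 2 := by
    rw [card_Pp hn4]; omega
  have hT : (thT n a h).card = a * b + 2 * a + 2 * b + 3 := by
    rw [card_thT hn4 h]; omega
  refine ⟨?_, ?_, ?_, ?_⟩
  · rw [hmm, hT]
  · rw [hmm, thT, Finset.filter_insert, if_pos (Finset.card_singleton _)]
    have hempty : ((Pp n a).image (gg n a h)).filter (fun M => M.card = 1) = ∅ := by
      refine Finset.filter_eq_empty_iff.mpr fun M hM => ?_
      obtain ⟨p, hp, rfl⟩ := Finset.mem_image.mp hM
      rw [card_gg hn4 h hp]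
      omega
    rw [hempty]
    simp
  · intro M hM hne
    rw [hmm, thT, Finset.mem_insert] at hM
    rcases hM with rfl | hM
    · exact absurd (Finset.card_singleton _) hne
    · obtain ⟨p, hp, rfl⟩ := Finset.mem_image.mp hM
      exact card_gg hn4 h hp
  · unfold avm
    rw [hmm]
    have hsum : ∑ M ∈ thT n a h, (M.card : ℚ) = 1 + 2 * ((Pp n a).card : ℚ) := by
      rw [thT, Finset.sum_insert (uv_not_mem hn4 h), Finset.sum_image (injOn_gg hn4 h),
        Finset.card_singleton]
      rw [Finset.sum_congr rfl (fun p hp => by rw [card_gg hn4 h hp] : ∀ p ∈ Pp n a,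
        (((gg n a h p).card : ℚ)) = ((2 : ℕ) : ℚ))]
      rw [Finset.sum_const, nsmul_eq_mul]
      push_cast
      ring
    rw [hsum, hT, hPp]
    have hd : (a : ℚ) * b + 2 * ((a : ℚ) + b) + 3 ≠ 0 := by positivity
    have hd2 : ((a * b + 2 * a + 2 * b + 3 : ℕ) : ℚ) ≠ 0 := by positivity
    push_cast
    push_cast at hd2
    field_simp
    ring
end

section
/- The graph R_n(3,3) on n ≥ 6 vertices (two triangles sharing a vertex u, with k = n−5 pendant edges attached to a degree-2 vertex v₁ of one triangle) has exactly 2k+4 maximal matchings of size 2 and exactly k maximal matchings of size 3, and no others; hence avm(R_n(3,3)) = (7n−27)/(3n−11). -/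
open scoped Classical

/-- `R_n(3,3)`: two triangles sharing the vertex `0 = u`; `1 = v₁`, `2 = v₂`,
`3 = w₁`, `4 = w₂`, and every vertex `i` with `5 ≤ i` is a leaf attached to `v₁`. -/
def R33 (n : ℕ) : SimpleGraph (Fin n) :=
  SimpleGraph.fromRel fun x y =>
    ((x : ℕ) = 0 ∧ (y : ℕ) = 1) ∨ ((x : ℕ) = 1 ∧ (y : ℕ) = 2) ∨
    ((x : ℕ) = 0 ∧ (y : ℕ) = 2) ∨ ((x : ℕ) = 0 ∧ (y : ℕ) = 3) ∨
    ((x : ℕ) = 3 ∧ (y : ℕ) = 4) ∨ ((x : ℕ) = 0 ∧ (y : ℕ) = 4) ∨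
    ((x : ℕ) = 1 ∧ 5 ≤ (y : ℕ))

namespace R33proof

variable {n : ℕ}

def u0 (hn : 6 ≤ n) : Fin n := ⟨0, by omega⟩
def u1 (hn : 6 ≤ n) : Fin n := ⟨1, by omega⟩
def u2 (hn : 6 ≤ n) : Fin n := ⟨2, by omega⟩
def u3 (hn : 6 ≤ n) : Fin n := ⟨3, by omega⟩
def u4 (hn : 6 ≤ n) : Fin n := ⟨4, by omega⟩

def E01 (hn : 6 ≤ n) : Sym2 (Fin n) := s(u0 hn, u1 hn)
def E12 (hn : 6 ≤ n) : Sym2 (Fin n) := s(u1 hn, u2 hn)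
def E02 (hn : 6 ≤ n) : Sym2 (Fin n) := s(u0 hn, u2 hn)
def E03 (hn : 6 ≤ n) : Sym2 (Fin n) := s(u0 hn, u3 hn)
def E34 (hn : 6 ≤ n) : Sym2 (Fin n) := s(u3 hn, u4 hn)
def E04 (hn : 6 ≤ n) : Sym2 (Fin n) := s(u0 hn, u4 hn)
def P (hn : 6 ≤ n) (i : Fin n) : Sym2 (Fin n) := s(u1 hn, i)

lemma edge_cases (hn : 6 ≤ n) {f : Sym2 (Fin n)} (hf : f ∈ (R33 n).edgeSet) :
    f = E01 hn ∨ f = E12 hn ∨ f = E02 hn ∨ f = E03 hn ∨ f = E34 hn ∨ f = E04 hn ∨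
      ∃ i : Fin n, 5 ≤ (i : ℕ) ∧ f = P hn i := by
  induction f using Sym2.ind with
  | _ x y =>
    rw [SimpleGraph.mem_edgeSet, R33, SimpleGraph.fromRel_adj] at hf
    obtain ⟨hne, h | h⟩ := hf
    all_goals {
      rcases h with ⟨h1, h2⟩ | ⟨h1, h2⟩ | ⟨h1, h2⟩ | ⟨h1, h2⟩ | ⟨h1, h2⟩ | ⟨h1, h2⟩ | ⟨h1, h2⟩
      · exact Or.inl (by simp [E01, u0, u1, Sym2.eq_iff, Fin.ext_iff]; omega)
      · exact Or.inr (Or.inl (by simp [E12, u1, u2, Sym2.eq_iff, Fin.ext_iff]; omega))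
      · exact Or.inr (Or.inr (Or.inl (by simp [E02, u0, u2, Sym2.eq_iff, Fin.ext_iff]; omega)))
      · exact Or.inr (Or.inr (Or.inr (Or.inl (by simp [E03, u0, u3, Sym2.eq_iff, Fin.ext_iff]; omega))))
      · exact Or.inr (Or.inr (Or.inr (Or.inr (Or.inl (by simp [E34, u3, u4, Sym2.eq_iff, Fin.ext_iff]; omega)))))
      · exact Or.inr (Or.inr (Or.inr (Or.inr (Or.inr (Or.inl (by simp [E04, u0, u4, Sym2.eq_iff, Fin.ext_iff]; omega))))))
      · first
        | exact Or.inr (Or.inr (Or.inr (Or.inr (Or.inr (Or.inr ⟨y, h2, by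
            simp [P, u1, Sym2.eq_iff, Fin.ext_iff]; omega⟩)))))
        | exact Or.inr (Or.inr (Or.inr (Or.inr (Or.inr (Or.inr ⟨x, h2, by
            simp [P, u1, Sym2.eq_iff, Fin.ext_iff]; omega⟩))))) }
lemma E01_mem (hn : 6 ≤ n) : E01 hn ∈ (R33 n).edgeSet := by
  rw [E01, SimpleGraph.mem_edgeSet, R33, SimpleGraph.fromRel_adj]
  refine ⟨by simp [u0, u1, Fin.ext_iff], Or.inl ?_⟩
  simp [u0, u1, Nat.mod_eq_of_lt (by omega : (1:ℕ) < n)]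

lemma E12_mem (hn : 6 ≤ n) : E12 hn ∈ (R33 n).edgeSet := by
  rw [E12, SimpleGraph.mem_edgeSet, R33, SimpleGraph.fromRel_adj]
  exact ⟨by simp [u1, u2, Fin.ext_iff], Or.inl (by simp [u1, u2])⟩

lemma E02_mem (hn : 6 ≤ n) : E02 hn ∈ (R33 n).edgeSet := by
  rw [E02, SimpleGraph.mem_edgeSet, R33, SimpleGraph.fromRel_adj]
  exact ⟨by simp [u0, u2, Fin.ext_iff], Or.inl (by simp [u0, u2])⟩

lemma E03_mem (hn : 6 ≤ n) : E03 hn ∈ (R33 n).edgeSet := by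
  rw [E03, SimpleGraph.mem_edgeSet, R33, SimpleGraph.fromRel_adj]
  exact ⟨by simp [u0, u3, Fin.ext_iff], Or.inl (by simp [u0, u3])⟩

lemma E34_mem (hn : 6 ≤ n) : E34 hn ∈ (R33 n).edgeSet := by
  rw [E34, SimpleGraph.mem_edgeSet, R33, SimpleGraph.fromRel_adj]
  exact ⟨by simp [u3, u4, Fin.ext_iff], Or.inl (by simp [u3, u4])⟩

lemma E04_mem (hn : 6 ≤ n) : E04 hn ∈ (R33 n).edgeSet := by
  rw [E04, SimpleGraph.mem_edgeSet, R33, SimpleGraph.fromRel_adj]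
  exact ⟨by simp [u0, u4, Fin.ext_iff], Or.inl (by simp [u0, u4])⟩

lemma P_mem (hn : 6 ≤ n) {i : Fin n} (hi : 5 ≤ (i : ℕ)) : P hn i ∈ (R33 n).edgeSet := by
  rw [P, SimpleGraph.mem_edgeSet, R33, SimpleGraph.fromRel_adj]
  refine ⟨by simp [u1, Fin.ext_iff]; omega, Or.inl ?_⟩
  simp [u1]; omega

lemma matching_eq_of_shared {V : Type*} {G : SimpleGraph V} {M : Finset (Sym2 V)}
    (hM : IsMatchingSet G M) {e f : Sym2 V} (he : e ∈ M) (hf : f ∈ M) {v : V}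
    (hv : v ∈ e) (hv' : v ∈ f) : e = f := by
  by_contra hne
  exact hM.2 (Finset.mem_coe.2 he) (Finset.mem_coe.2 hf) hne v ⟨hv, hv'⟩

lemma mem_of_maximal {V : Type*} {G : SimpleGraph V} {M : Finset (Sym2 V)}
    (hM : IsMaximalMatching G M) {f : Sym2 V} (hf : f ∈ G.edgeSet)
    (h : ∀ e ∈ M, ∀ v : V, ¬(v ∈ e ∧ v ∈ f)) : f ∈ M := by
  have hins : IsMatchingSet G (insert f M) := by
    constructor
    · intro e he
      rw [Finset.coe_insert, Set.mem_insert_iff] at he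
      rcases he with rfl | he
      · exact hf
      · exact hM.1.1 he
    · intro a ha b hb hab v hv
      rw [Finset.coe_insert, Set.mem_insert_iff] at ha hb
      rcases ha with rfl | ha <;> rcases hb with rfl | hb
      · exact hab rfl
      · exact h b (Finset.mem_coe.1 hb) v ⟨hv.2, hv.1⟩
      · exact h a (Finset.mem_coe.1 ha) v hv
      · exact hM.1.2 ha hb hab v hv
  have := hM.2 _ hins (Finset.subset_insert f M)
  rw [← this]; exact Finset.mem_insert_self f M

lemma maximal_of {V : Type*} {G : SimpleGraph V} {M : Finset (Sym2 V)}
    (hm : IsMatchingSet G M)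
    (hblock : ∀ f ∈ G.edgeSet, f ∉ M → ∃ e ∈ M, ∃ v : V, v ∈ e ∧ v ∈ f) :
    IsMaximalMatching G M := by
  refine ⟨hm, fun N hN hMN => ?_⟩
  refine Finset.Subset.antisymm (fun f hf => ?_) hMN
  by_contra hfM
  obtain ⟨e, heM, v, hve, hvf⟩ := hblock f (hN.1 (Finset.mem_coe.2 hf)) hfM
  have hef : e ≠ f := fun h => hfM (h ▸ heM)
  exact hN.2 (Finset.mem_coe.2 (hMN heM)) (Finset.mem_coe.2 hf) hef v ⟨hve, hvf⟩
attribute [local simp] E01 E12 E02 E03 E34 E04 P u0 u1 u2 u3 u4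

lemma max1 (hn : 6 ≤ n) : IsMaximalMatching (R33 n) {E01 hn, E34 hn} := by
  apply maximal_of
  · constructor
    · intro e he
      simp only [Finset.coe_insert, Set.mem_insert_iff, Finset.coe_singleton,
        Set.mem_singleton_iff] at he
      rcases he with rfl | rfl
      · exact E01_mem hn
      · exact E34_mem hn
    · intro a ha b hb hne v hv
      simp only [Finset.coe_insert, Set.mem_insert_iff, Finset.coe_singleton,
        Set.mem_singleton_iff] at ha hb
      rcases ha with rfl | rfl <;> rcases hb with rfl | rfl <;>
        [exact hne rfl; skip; skip; exact hne rfl] <;>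
        (obtain ⟨h1, h2⟩ := hv;
         simp only [E01, E34, u0, u1, u3, u4, Sym2.mem_iff, Fin.ext_iff] at h1 h2; omega)
  · intro f hf hfM
    rcases edge_cases hn hf with rfl | rfl | rfl | rfl | rfl | rfl | ⟨i, hi, rfl⟩
    · exact absurd (by simp) hfM
    · exact ⟨E01 hn, by simp, u1 hn, by simp, by simp⟩
    · exact ⟨E01 hn, by simp, u0 hn, by simp, by simp⟩
    · exact ⟨E01 hn, by simp, u0 hn, by simp, by simp⟩
    · exact absurd (by simp) hfM
    · exact ⟨E01 hn, by simp, u0 hn, by simp, by simp⟩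
    · exact ⟨E01 hn, by simp, u1 hn, by simp, by simp⟩
lemma pair_matching (hn : 6 ≤ n) {A B : Sym2 (Fin n)}
    (hA : A ∈ (R33 n).edgeSet) (hB : B ∈ (R33 n).edgeSet)
    (hd : ∀ v : Fin n, ¬(v ∈ A ∧ v ∈ B)) : IsMatchingSet (R33 n) {A, B} := by
  constructor
  · intro e he
    simp only [Finset.coe_insert, Set.mem_insert_iff, Finset.coe_singleton,
      Set.mem_singleton_iff] at he
    rcases he with rfl | rfl
    · exact hA
    · exact hB
  · intro a ha b hb hne v hv
    simp only [Finset.coe_insert, Set.mem_insert_iff, Finset.coe_singleton,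
      Set.mem_singleton_iff] at ha hb
    rcases ha with rfl | rfl <;> rcases hb with rfl | rfl
    · exact hne rfl
    · exact hd v hv
    · exact hd v ⟨hv.2, hv.1⟩
    · exact hne rfl

lemma max2 (hn : 6 ≤ n) : IsMaximalMatching (R33 n) {E12 hn, E34 hn} := by
  apply maximal_of
  · refine pair_matching hn (E12_mem hn) (E34_mem hn) fun v hv => ?_
    obtain ⟨h1, h2⟩ := hv
    simp only [E12, E34, u1, u2, u3, u4, Sym2.mem_iff, Fin.ext_iff] at h1 h2; omega
  · intro f hf hfM
    rcases edge_cases hn hf with rfl | rfl | rfl | rfl | rfl | rfl | ⟨i, hi, rfl⟩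
    · exact ⟨E12 hn, by simp, u1 hn, by simp, by simp⟩
    · exact absurd (by simp) hfM
    · exact ⟨E12 hn, by simp, u2 hn, by simp, by simp⟩
    · exact ⟨E34 hn, by simp, u3 hn, by simp, by simp⟩
    · exact absurd (by simp) hfM
    · exact ⟨E34 hn, by simp, u4 hn, by simp, by simp⟩
    · exact ⟨E12 hn, by simp, u1 hn, by simp, by simp⟩

lemma max3 (hn : 6 ≤ n) : IsMaximalMatching (R33 n) {E12 hn, E03 hn} := by
  apply maximal_of
  · refine pair_matching hn (E12_mem hn) (E03_mem hn) fun v hv => ?_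
    obtain ⟨h1, h2⟩ := hv
    simp only [E12, E03, u0, u1, u2, u3, Sym2.mem_iff, Fin.ext_iff] at h1 h2; omega
  · intro f hf hfM
    rcases edge_cases hn hf with rfl | rfl | rfl | rfl | rfl | rfl | ⟨i, hi, rfl⟩
    · exact ⟨E12 hn, by simp, u1 hn, by simp, by simp⟩
    · exact absurd (by simp) hfM
    · exact ⟨E12 hn, by simp, u2 hn, by simp, by simp⟩
    · exact absurd (by simp) hfM
    · exact ⟨E03 hn, by simp, u3 hn, by simp, by simp⟩
    · exact ⟨E03 hn, by simp, u0 hn, by simp, by simp⟩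
    · exact ⟨E12 hn, by simp, u1 hn, by simp, by simp⟩

lemma max4 (hn : 6 ≤ n) : IsMaximalMatching (R33 n) {E12 hn, E04 hn} := by
  apply maximal_of
  · refine pair_matching hn (E12_mem hn) (E04_mem hn) fun v hv => ?_
    obtain ⟨h1, h2⟩ := hv
    simp only [E12, E04, u0, u1, u2, u4, Sym2.mem_iff, Fin.ext_iff] at h1 h2; omega
  · intro f hf hfM
    rcases edge_cases hn hf with rfl | rfl | rfl | rfl | rfl | rfl | ⟨i, hi, rfl⟩
    · exact ⟨E12 hn, by simp, u1 hn, by simp, by simp⟩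
    · exact absurd (by simp) hfM
    · exact ⟨E12 hn, by simp, u2 hn, by simp, by simp⟩
    · exact ⟨E04 hn, by simp, u0 hn, by simp, by simp⟩
    · exact ⟨E04 hn, by simp, u4 hn, by simp, by simp⟩
    · exact absurd (by simp) hfM
    · exact ⟨E12 hn, by simp, u1 hn, by simp, by simp⟩

lemma max5 (hn : 6 ≤ n) {i : Fin n} (hi : 5 ≤ (i : ℕ)) :
    IsMaximalMatching (R33 n) {P hn i, E03 hn} := by
  apply maximal_of
  · refine pair_matching hn (P_mem hn hi) (E03_mem hn) fun v hv => ?_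
    obtain ⟨h1, h2⟩ := hv
    simp only [P, E03, u0, u1, u3, Sym2.mem_iff, Fin.ext_iff] at h1 h2; omega
  · intro f hf hfM
    rcases edge_cases hn hf with rfl | rfl | rfl | rfl | rfl | rfl | ⟨j, hj, rfl⟩
    · exact ⟨E03 hn, by simp, u0 hn, by simp, by simp⟩
    · exact ⟨P hn i, by simp, u1 hn, by simp, by simp⟩
    · exact ⟨E03 hn, by simp, u0 hn, by simp, by simp⟩
    · exact absurd (by simp) hfM
    · exact ⟨E03 hn, by simp, u3 hn, by simp, by simp⟩
    · exact ⟨E03 hn, by simp, u0 hn, by simp, by simp⟩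
    · exact ⟨P hn i, by simp, u1 hn, by simp, by simp⟩

lemma max6 (hn : 6 ≤ n) {i : Fin n} (hi : 5 ≤ (i : ℕ)) :
    IsMaximalMatching (R33 n) {P hn i, E04 hn} := by
  apply maximal_of
  · refine pair_matching hn (P_mem hn hi) (E04_mem hn) fun v hv => ?_
    obtain ⟨h1, h2⟩ := hv
    simp only [P, E04, u0, u1, u4, Sym2.mem_iff, Fin.ext_iff] at h1 h2; omega
  · intro f hf hfM
    rcases edge_cases hn hf with rfl | rfl | rfl | rfl | rfl | rfl | ⟨j, hj, rfl⟩
    · exact ⟨E04 hn, by simp, u0 hn, by simp, by simp⟩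
    · exact ⟨P hn i, by simp, u1 hn, by simp, by simp⟩
    · exact ⟨E04 hn, by simp, u0 hn, by simp, by simp⟩
    · exact ⟨E04 hn, by simp, u0 hn, by simp, by simp⟩
    · exact ⟨E04 hn, by simp, u4 hn, by simp, by simp⟩
    · exact absurd (by simp) hfM
    · exact ⟨P hn i, by simp, u1 hn, by simp, by simp⟩

lemma max7 (hn : 6 ≤ n) {i : Fin n} (hi : 5 ≤ (i : ℕ)) :
    IsMaximalMatching (R33 n) {E02 hn, E34 hn, P hn i} := by
  apply maximal_of
  · constructor
    · intro e he
      simp only [Finset.coe_insert, Set.mem_insert_iff, Finset.coe_singleton,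
        Set.mem_singleton_iff] at he
      rcases he with rfl | rfl | rfl
      · exact E02_mem hn
      · exact E34_mem hn
      · exact P_mem hn hi
    · intro a ha b hb hne v hv
      simp only [Finset.coe_insert, Set.mem_insert_iff, Finset.coe_singleton,
        Set.mem_singleton_iff] at ha hb
      rcases ha with rfl | rfl | rfl <;> rcases hb with rfl | rfl | rfl <;>
        first
        | exact hne rfl
        | (obtain ⟨h1, h2⟩ := hv;
           simp only [E02, E34, P, u0, u1, u2, u3, u4, Sym2.mem_iff, Fin.ext_iff] at h1 h2;
           omega)
  · intro f hf hfM
    rcases edge_cases hn hf with rfl | rfl | rfl | rfl | rfl | rfl | ⟨j, hj, rfl⟩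
    · exact ⟨E02 hn, by simp, u0 hn, by simp, by simp⟩
    · exact ⟨E02 hn, by simp, u2 hn, by simp, by simp⟩
    · exact absurd (by simp) hfM
    · exact ⟨E34 hn, by simp, u3 hn, by simp, by simp⟩
    · exact absurd (by simp) hfM
    · exact ⟨E34 hn, by simp, u4 hn, by simp, by simp⟩
    · exact ⟨P hn i, by simp, u1 hn, by simp, by simp⟩
lemma classify (hn : 6 ≤ n) {M : Finset (Sym2 (Fin n))}
    (hM : IsMaximalMatching (R33 n) M) :
    M = {E01 hn, E34 hn} ∨ M = {E12 hn, E34 hn} ∨ M = {E12 hn, E03 hn} ∨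
      M = {E12 hn, E04 hn} ∨ ∃ i : Fin n, 5 ≤ (i : ℕ) ∧
        (M = {P hn i, E03 hn} ∨ M = {P hn i, E04 hn} ∨ M = {E02 hn, E34 hn, P hn i}) := by
  have hsub : ∀ {e : Sym2 (Fin n)}, e ∈ M → e ∈ (R33 n).edgeSet := fun he => hM.1.1 he
  have share : ∀ {e f : Sym2 (Fin n)}, e ∈ M → f ∈ M → ∀ v : Fin n, v ∈ e → v ∈ f → e = f :=
    fun he hf v hv hv' => matching_eq_of_shared hM.1 he hf hv hv'
  -- step 1 : some edge of M contains u1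
  have h1cov : ∃ e ∈ M, u1 hn ∈ e := by
    by_contra hc
    push_neg at hc
    set w5 : Fin n := ⟨5, by omega⟩ with hw5
    have hw5v : 5 ≤ (w5 : ℕ) := le_refl 5
    have hPw5 : P hn w5 ∈ M := by
      apply mem_of_maximal hM (P_mem hn hw5v)
      intro e he v hv
      obtain ⟨hv1, hv2⟩ := hv
      simp only [P, Sym2.mem_iff] at hv2
      rcases hv2 with rfl | rfl
      · exact hc e he hv1
      · rcases edge_cases hn (hsub he) with rfl | rfl | rfl | rfl | rfl | rfl | ⟨i, hi, rfl⟩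
        · simp only [E01, u0, u1, Sym2.mem_iff, Fin.ext_iff, hw5] at hv1; omega
        · simp only [E12, u1, u2, Sym2.mem_iff, Fin.ext_iff, hw5] at hv1; omega
        · simp only [E02, u0, u2, Sym2.mem_iff, Fin.ext_iff, hw5] at hv1; omega
        · simp only [E03, u0, u3, Sym2.mem_iff, Fin.ext_iff, hw5] at hv1; omega
        · simp only [E34, u3, u4, Sym2.mem_iff, Fin.ext_iff, hw5] at hv1; omega
        · simp only [E04, u0, u4, Sym2.mem_iff, Fin.ext_iff, hw5] at hv1; omega
        · exact hc _ he (by simp)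
    exact hc _ hPw5 (by simp)
  obtain ⟨e0, he0, h1e0⟩ := h1cov
  rcases edge_cases hn (hsub he0) with rfl | rfl | rfl | rfl | rfl | rfl | ⟨i, hi, rfl⟩
  -- case e0 = E01
  · have h34 : E34 hn ∈ M := by
      by_contra h34
      apply h34
      apply mem_of_maximal hM (E34_mem hn)
      intro e he v hv
      obtain ⟨hv1, hv2⟩ := hv
      simp only [E34, u3, u4, Sym2.mem_iff] at hv2
      rcases edge_cases hn (hsub he) with rfl | rfl | rfl | rfl | rfl | rfl | ⟨i, hi, rfl⟩ <;>
        [skip; skip; skip; skip; exact h34 he; skip; skip] <;>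
        [ (rcases hv2 with rfl | rfl <;>
            (simp only [E01, u0, u1, u3, u4, Sym2.mem_iff, Fin.ext_iff] at hv1; omega));
          (rcases hv2 with rfl | rfl <;>
            (simp only [E12, u1, u2, u3, u4, Sym2.mem_iff, Fin.ext_iff] at hv1; omega));
          (rcases hv2 with rfl | rfl <;>
            (simp only [E02, u0, u2, u3, u4, Sym2.mem_iff, Fin.ext_iff] at hv1; omega));
          (have := share he he0 (u0 hn) (by simp) (by simp);
            simp only [E03, E01, u0, u1, u3, Sym2.eq_iff, Fin.ext_iff] at this; omega);
          (have := share he he0 (u0 hn) (by simp) (by simp);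
            simp only [E04, E01, u0, u1, u4, Sym2.eq_iff, Fin.ext_iff] at this; omega);
          (rcases hv2 with rfl | rfl <;>
            (simp only [P, u1, u3, u4, Sym2.mem_iff, Fin.ext_iff] at hv1; omega))]
    left
    apply Finset.Subset.antisymm
    · intro f hfM
      rcases edge_cases hn (hsub hfM) with rfl | rfl | rfl | rfl | rfl | rfl | ⟨i, hi, rfl⟩
      · simp
      · have := share hfM he0 (u1 hn) (by simp) (by simp)
        simp only [E12, E01, u0, u1, u2, Sym2.eq_iff, Fin.ext_iff] at this; omega
      · have := share hfM he0 (u0 hn) (by simp) (by simp)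
        simp only [E02, E01, u0, u1, u2, Sym2.eq_iff, Fin.ext_iff] at this; omega
      · have := share hfM h34 (u3 hn) (by simp) (by simp)
        simp only [E03, E34, u0, u3, u4, Sym2.eq_iff, Fin.ext_iff] at this; omega
      · simp
      · have := share hfM h34 (u4 hn) (by simp) (by simp)
        simp only [E04, E34, u0, u3, u4, Sym2.eq_iff, Fin.ext_iff] at this; omega
      · have := share hfM he0 (u1 hn) (by simp) (by simp)
        simp only [P, E01, u0, u1, Sym2.eq_iff, Fin.ext_iff] at this; omega
    · intro f hf
      simp only [Finset.mem_insert, Finset.mem_singleton] at hf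
      rcases hf with rfl | rfl
      · exact he0
      · exact h34
  -- case e0 = E12
  · have hblock : E34 hn ∈ M ∨ E03 hn ∈ M ∨ E04 hn ∈ M := by
      by_contra hb
      push_neg at hb
      obtain ⟨h34, h03, h04⟩ := hb
      apply h34
      apply mem_of_maximal hM (E34_mem hn)
      intro e he v hv
      obtain ⟨hv1, hv2⟩ := hv
      simp only [E34, u3, u4, Sym2.mem_iff] at hv2
      rcases edge_cases hn (hsub he) with rfl | rfl | rfl | rfl | rfl | rfl | ⟨i, hi, rfl⟩ <;>
        [skip; skip; skip; exact h03 he; exact h34 he; exact h04 he; skip] <;>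
        (rcases hv2 with rfl | rfl <;>
          (simp only [E01, E12, E02, P, u0, u1, u2, u3, u4, Sym2.mem_iff,
            Fin.ext_iff] at hv1 <;> omega))
    have main : ∀ X ∈ M, (∀ v : Fin n, ¬(v ∈ X ∧ v ∈ E12 hn)) →
        (u3 hn ∈ X ∨ u4 hn ∈ X) → M = {E12 hn, X} := by
      intro X hX hdisj hX34
      apply Finset.Subset.antisymm
      · intro f hfM
        rcases edge_cases hn (hsub hfM) with rfl | rfl | rfl | rfl | rfl | rfl | ⟨i, hi, rfl⟩
        · have := share hfM he0 (u1 hn) (by simp) (by simp)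
          simp only [E01, E12, u0, u1, u2, Sym2.eq_iff, Fin.ext_iff] at this; omega
        · simp
        · have := share hfM he0 (u2 hn) (by simp) (by simp)
          simp only [E02, E12, u0, u1, u2, Sym2.eq_iff, Fin.ext_iff] at this; omega
        · rcases hX34 with h | h
          · have := share hfM hX (u3 hn) (by simp) h; exact Finset.mem_insert_of_mem (Finset.mem_singleton.2 this)
          · rcases edge_cases hn (hsub hX) with rfl | rfl | rfl | rfl | rfl | rfl | ⟨j, hj, rfl⟩
            · exact absurd ⟨by simp, by simp⟩ (hdisj (u1 hn))
            · exact absurd ⟨by simp, by simp⟩ (hdisj (u1 hn))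
            · exfalso; simp only [E02, u0, u2, u4, Sym2.mem_iff, Fin.ext_iff] at h; omega
            · exfalso; simp only [E03, u0, u3, u4, Sym2.mem_iff, Fin.ext_iff] at h; omega
            · exact Finset.mem_insert_of_mem (Finset.mem_singleton.2
                (share hfM hX (u3 hn) (by simp) (by simp)))
            · exact Finset.mem_insert_of_mem (Finset.mem_singleton.2
                (share hfM hX (u0 hn) (by simp) (by simp)))
            · exact absurd ⟨by simp, by simp⟩ (hdisj (u1 hn))
        · rcases hX34 with h | h
          · have := share hfM hX (u3 hn) (by simp) h; exact Finset.mem_insert_of_mem (Finset.mem_singleton.2 this)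
          · have := share hfM hX (u4 hn) (by simp) h; exact Finset.mem_insert_of_mem (Finset.mem_singleton.2 this)
        · rcases hX34 with h | h
          · rcases edge_cases hn (hsub hX) with rfl | rfl | rfl | rfl | rfl | rfl | ⟨j, hj, rfl⟩
            · exact absurd ⟨by simp, by simp⟩ (hdisj (u1 hn))
            · exact absurd ⟨by simp, by simp⟩ (hdisj (u1 hn))
            · exfalso; simp only [E02, u0, u2, u3, Sym2.mem_iff, Fin.ext_iff] at h; omega
            · exact Finset.mem_insert_of_mem (Finset.mem_singleton.2
                (share hfM hX (u0 hn) (by simp) (by simp)))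
            · exact Finset.mem_insert_of_mem (Finset.mem_singleton.2
                (share hfM hX (u4 hn) (by simp) (by simp)))
            · exfalso; simp only [E04, u0, u3, u4, Sym2.mem_iff, Fin.ext_iff] at h; omega
            · exact absurd ⟨by simp, by simp⟩ (hdisj (u1 hn))
          · have := share hfM hX (u4 hn) (by simp) h; exact Finset.mem_insert_of_mem (Finset.mem_singleton.2 this)
        · have := share hfM he0 (u1 hn) (by simp) (by simp)
          simp only [P, E12, u1, u2, Sym2.eq_iff, Fin.ext_iff] at this; omega
      · intro f hf
        simp only [Finset.mem_insert, Finset.mem_singleton] at hf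
        rcases hf with rfl | rfl
        · exact he0
        · exact hX
    rcases hblock with h | h | h
    · refine Or.inr (Or.inl (main _ h ?_ ?_))
      · intro v hv; obtain ⟨h1, h2⟩ := hv
        simp only [E34, E12, u1, u2, u3, u4, Sym2.mem_iff, Fin.ext_iff] at h1 h2; omega
      · left; simp
    · refine Or.inr (Or.inr (Or.inl (main _ h ?_ ?_)))
      · intro v hv; obtain ⟨h1, h2⟩ := hv
        simp only [E03, E12, u0, u1, u2, u3, Sym2.mem_iff, Fin.ext_iff] at h1 h2; omega
      · left; simp
    · refine Or.inr (Or.inr (Or.inr (Or.inl (main _ h ?_ ?_))))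
      · intro v hv; obtain ⟨h1, h2⟩ := hv
        simp only [E04, E12, u0, u1, u2, u4, Sym2.mem_iff, Fin.ext_iff] at h1 h2; omega
      · right; simp
  -- impossible : e0 ∈ {E02, E03, E34, E04} does not contain u1
  · exfalso; simp only [E02, u1, u0, u2, Sym2.mem_iff, Fin.ext_iff] at h1e0; omega
  · exfalso; simp only [E03, u1, u0, u3, Sym2.mem_iff, Fin.ext_iff] at h1e0; omega
  · exfalso; simp only [E34, u1, u3, u4, Sym2.mem_iff, Fin.ext_iff] at h1e0; omega
  · exfalso; simp only [E04, u1, u0, u4, Sym2.mem_iff, Fin.ext_iff] at h1e0; omega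
  -- case e0 = P i
  · refine Or.inr (Or.inr (Or.inr (Or.inr ⟨i, hi, ?_⟩)))
    by_cases h03 : E03 hn ∈ M
    · left
      apply Finset.Subset.antisymm
      · intro f hfM
        rcases edge_cases hn (hsub hfM) with rfl | rfl | rfl | rfl | rfl | rfl | ⟨j, hj, rfl⟩
        · have := share hfM h03 (u0 hn) (by simp) (by simp)
          simp only [E01, E03, u0, u1, u3, Sym2.eq_iff, Fin.ext_iff] at this; omega
        · have := share hfM he0 (u1 hn) (by simp) (by simp)
          simp only [E12, P, u1, u2, Sym2.eq_iff, Fin.ext_iff] at this; omega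
        · have := share hfM h03 (u0 hn) (by simp) (by simp)
          simp only [E02, E03, u0, u2, u3, Sym2.eq_iff, Fin.ext_iff] at this; omega
        · simp
        · have := share hfM h03 (u3 hn) (by simp) (by simp)
          simp only [E34, E03, u0, u3, u4, Sym2.eq_iff, Fin.ext_iff] at this; omega
        · have := share hfM h03 (u0 hn) (by simp) (by simp)
          simp only [E04, E03, u0, u3, u4, Sym2.eq_iff, Fin.ext_iff] at this; omega
        · have := share hfM he0 (u1 hn) (by simp) (by simp)
          exact Finset.mem_insert.2 (Or.inl this)
      · intro f hf
        simp only [Finset.mem_insert, Finset.mem_singleton] at hf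
        rcases hf with rfl | rfl
        · exact he0
        · exact h03
    · by_cases h04 : E04 hn ∈ M
      · right; left
        apply Finset.Subset.antisymm
        · intro f hfM
          rcases edge_cases hn (hsub hfM) with rfl | rfl | rfl | rfl | rfl | rfl | ⟨j, hj, rfl⟩
          · have := share hfM h04 (u0 hn) (by simp) (by simp)
            simp only [E01, E04, u0, u1, u4, Sym2.eq_iff, Fin.ext_iff] at this; omega
          · have := share hfM he0 (u1 hn) (by simp) (by simp)
            simp only [E12, P, u1, u2, Sym2.eq_iff, Fin.ext_iff] at this; omega
          · have := share hfM h04 (u0 hn) (by simp) (by simp)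
            simp only [E02, E04, u0, u2, u4, Sym2.eq_iff, Fin.ext_iff] at this; omega
          · have := share hfM h04 (u0 hn) (by simp) (by simp)
            simp only [E03, E04, u0, u3, u4, Sym2.eq_iff, Fin.ext_iff] at this; omega
          · have := share hfM h04 (u4 hn) (by simp) (by simp)
            simp only [E34, E04, u0, u3, u4, Sym2.eq_iff, Fin.ext_iff] at this; omega
          · simp
          · have := share hfM he0 (u1 hn) (by simp) (by simp)
            exact Finset.mem_insert.2 (Or.inl this)
        · intro f hf
          simp only [Finset.mem_insert, Finset.mem_singleton] at hf
          rcases hf with rfl | rfl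
          · exact he0
          · exact h04
      · -- E03 ∉ M, E04 ∉ M : must have E34 ∈ M then E02 ∈ M
        have h34 : E34 hn ∈ M := by
          by_contra h34
          apply h34
          apply mem_of_maximal hM (E34_mem hn)
          intro e he v hv
          obtain ⟨hv1, hv2⟩ := hv
          simp only [E34, u3, u4, Sym2.mem_iff] at hv2
          rcases edge_cases hn (hsub he) with rfl | rfl | rfl | rfl | rfl | rfl | ⟨j, hj, rfl⟩ <;>
            [skip; skip; skip; exact h03 he; exact h34 he; exact h04 he; skip] <;>
            (rcases hv2 with rfl | rfl <;>
              (simp only [E01, E12, E02, P, u0, u1, u2, u3, u4, Sym2.mem_iff,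
                Fin.ext_iff] at hv1 <;> omega))
        have h02 : E02 hn ∈ M := by
          by_contra h02
          apply h02
          apply mem_of_maximal hM (E02_mem hn)
          intro e he v hv
          obtain ⟨hv1, hv2⟩ := hv
          simp only [E02, u0, u2, Sym2.mem_iff] at hv2
          rcases edge_cases hn (hsub he) with rfl | rfl | rfl | rfl | rfl | rfl | ⟨j, hj, rfl⟩
          · have := share he he0 (u1 hn) (by simp) (by simp)
            simp only [E01, P, u0, u1, Sym2.eq_iff, Fin.ext_iff] at this; omega
          · have := share he he0 (u1 hn) (by simp) (by simp)
            simp only [E12, P, u1, u2, Sym2.eq_iff, Fin.ext_iff] at this; omega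
          · exact h02 he
          · exact h03 he
          · rcases hv2 with rfl | rfl <;>
              (simp only [E34, u0, u2, u3, u4, Sym2.mem_iff, Fin.ext_iff] at hv1 <;> omega)
          · exact h04 he
          · rcases hv2 with rfl | rfl <;>
              (simp only [P, u0, u1, u2, Sym2.mem_iff, Fin.ext_iff] at hv1 <;> omega)
        right; right
        apply Finset.Subset.antisymm
        · intro f hfM
          rcases edge_cases hn (hsub hfM) with rfl | rfl | rfl | rfl | rfl | rfl | ⟨j, hj, rfl⟩
          · have := share hfM h02 (u0 hn) (by simp) (by simp)
            simp only [E01, E02, u0, u1, u2, Sym2.eq_iff, Fin.ext_iff] at this; omega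
          · have := share hfM h02 (u2 hn) (by simp) (by simp)
            simp only [E12, E02, u0, u1, u2, Sym2.eq_iff, Fin.ext_iff] at this; omega
          · simp
          · exact absurd hfM h03
          · simp
          · exact absurd hfM h04
          · have := share hfM he0 (u1 hn) (by simp) (by simp)
            exact Finset.mem_insert_of_mem (Finset.mem_insert_of_mem (Finset.mem_singleton.2 this))
        · intro f hf
          simp only [Finset.mem_insert, Finset.mem_singleton] at hf
          rcases hf with rfl | rfl | rfl
          · exact h02
          · exact h34
          · exact he0
lemma mem_mm {V : Type*} [Fintype V] [DecidableEq V] {G : SimpleGraph V}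
    {M : Finset (Sym2 V)} : M ∈ maximalMatchings G ↔ IsMaximalMatching G M := by
  unfold maximalMatchings
  simp only [Finset.mem_filter, Finset.mem_powerset]
  exact ⟨fun h => h.2, fun h => ⟨fun e he => SimpleGraph.mem_edgeFinset.2 (h.1.1 he), h⟩⟩

def T (n : ℕ) : Finset (Fin n) := Finset.univ.filter (fun i => 5 ≤ (i : ℕ))

lemma T_mem {i : Fin n} : i ∈ T n ↔ 5 ≤ (i : ℕ) := by simp [T]

lemma T_card (hn : 6 ≤ n) : (T n).card = n - 5 := by
  have : (T n).card = (Finset.Ico 5 n).card := by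
    apply Finset.card_bij (fun (a : Fin n) _ => (a : ℕ))
    · intro a ha; rw [T_mem] at ha; exact Finset.mem_Ico.2 ⟨ha, a.isLt⟩
    · intro a _ b _ h; exact Fin.ext h
    · intro b hb
      rw [Finset.mem_Ico] at hb
      exact ⟨⟨b, hb.2⟩, T_mem.2 hb.1, rfl⟩
  rw [this, Nat.card_Ico]
noncomputable def quad (hn : 6 ≤ n) : Finset (Finset (Sym2 (Fin n))) :=
  {{E01 hn, E34 hn}, {E12 hn, E34 hn}, {E12 hn, E03 hn}, {E12 hn, E04 hn}}
noncomputable def img1 (hn : 6 ≤ n) : Finset (Finset (Sym2 (Fin n))) :=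
  (T n).image fun i => {P hn i, E03 hn}
noncomputable def img2 (hn : 6 ≤ n) : Finset (Finset (Sym2 (Fin n))) :=
  (T n).image fun i => {P hn i, E04 hn}
noncomputable def img3 (hn : 6 ≤ n) : Finset (Finset (Sym2 (Fin n))) :=
  (T n).image fun i => {E02 hn, E34 hn, P hn i}

lemma key (hn : 6 ≤ n) :
    maximalMatchings (R33 n) = quad hn ∪ img1 hn ∪ img2 hn ∪ img3 hn := by
  ext M
  rw [mem_mm]
  constructor
  · intro h
    rcases classify hn h with h | h | h | h | ⟨i, hi, h | h | h⟩
    · exact Finset.mem_union_left _ (Finset.mem_union_left _ (Finset.mem_union_left _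
        (by rw [h]; simp [quad])))
    · exact Finset.mem_union_left _ (Finset.mem_union_left _ (Finset.mem_union_left _
        (by rw [h]; simp [quad])))
    · exact Finset.mem_union_left _ (Finset.mem_union_left _ (Finset.mem_union_left _
        (by rw [h]; simp [quad])))
    · exact Finset.mem_union_left _ (Finset.mem_union_left _ (Finset.mem_union_left _
        (by rw [h]; simp [quad])))
    · exact Finset.mem_union_left _ (Finset.mem_union_left _ (Finset.mem_union_right _
        (Finset.mem_image.2 ⟨i, T_mem.2 hi, h.symm⟩)))
    · exact Finset.mem_union_left _ (Finset.mem_union_right _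
        (Finset.mem_image.2 ⟨i, T_mem.2 hi, h.symm⟩))
    · exact Finset.mem_union_right _ (Finset.mem_image.2 ⟨i, T_mem.2 hi, h.symm⟩)
  · intro h
    simp only [Finset.mem_union, quad, img1, img2, img3, Finset.mem_insert,
      Finset.mem_singleton, Finset.mem_image] at h
    rcases h with ((((rfl | rfl | rfl | rfl) | ⟨i, hi, rfl⟩) | ⟨i, hi, rfl⟩) | ⟨i, hi, rfl⟩)
    · exact max1 hn
    · exact max2 hn
    · exact max3 hn
    · exact max4 hn
    · exact max5 hn (T_mem.1 hi)
    · exact max6 hn (T_mem.1 hi)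
    · exact max7 hn (T_mem.1 hi)

lemma finne {α : Type*} [DecidableEq α] {s t : Finset α} {x : α}
    (hx : x ∈ s) (hx' : x ∉ t) : s ≠ t := fun h => hx' (h ▸ hx)

lemma quad_card (hn : 6 ≤ n) : (quad hn).card = 4 := by
  rw [quad]
  rw [Finset.card_insert_of_notMem, Finset.card_insert_of_notMem,
    Finset.card_insert_of_notMem, Finset.card_singleton]
  · simp only [Finset.mem_singleton]
    exact finne (Finset.mem_insert_of_mem (Finset.mem_singleton_self _))
        (by simp [Sym2.eq_iff, Fin.ext_iff])
  · simp only [Finset.mem_insert, Finset.mem_singleton]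
    push_neg
    constructor <;>
      exact finne (Finset.mem_insert_of_mem (Finset.mem_singleton_self _))
        (by simp [Sym2.eq_iff, Fin.ext_iff])
  · simp only [Finset.mem_insert, Finset.mem_singleton]
    push_neg
    refine ⟨?_, ?_, ?_⟩ <;>
      exact finne (Finset.mem_insert_self _ _) (by simp [Sym2.eq_iff, Fin.ext_iff])

lemma img1_card (hn : 6 ≤ n) : (img1 hn).card = n - 5 := by
  rw [img1, Finset.card_image_of_injOn, T_card hn]
  intro i hi j hj h
  have h' : ({P hn i, E03 hn} : Finset (Sym2 (Fin n))) = {P hn j, E03 hn} := h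
  have := h' ▸ Finset.mem_insert_self (P hn i) {E03 hn}
  simp only [Finset.mem_coe, T_mem] at hi hj
  simp only [Finset.mem_insert, Finset.mem_singleton, P, E03, u0, u1, u3,
    Sym2.eq_iff, Fin.ext_iff] at this
  rcases this with ((⟨-, h2⟩ | ⟨h1, -⟩) | (⟨h1, -⟩ | ⟨-, h2⟩)) <;> first | exact Fin.ext h2 | omega

lemma img2_card (hn : 6 ≤ n) : (img2 hn).card = n - 5 := by
  rw [img2, Finset.card_image_of_injOn, T_card hn]
  intro i hi j hj h
  have h' : ({P hn i, E04 hn} : Finset (Sym2 (Fin n))) = {P hn j, E04 hn} := h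
  have := h' ▸ Finset.mem_insert_self (P hn i) {E04 hn}
  simp only [Finset.mem_coe, T_mem] at hi hj
  simp only [Finset.mem_insert, Finset.mem_singleton, P, E04, u0, u1, u4,
    Sym2.eq_iff, Fin.ext_iff] at this
  rcases this with ((⟨-, h2⟩ | ⟨h1, -⟩) | (⟨h1, -⟩ | ⟨-, h2⟩)) <;> first | exact Fin.ext h2 | omega

lemma img3_card (hn : 6 ≤ n) : (img3 hn).card = n - 5 := by
  rw [img3, Finset.card_image_of_injOn, T_card hn]
  intro i hi j hj h
  have h' : ({E02 hn, E34 hn, P hn i} : Finset (Sym2 (Fin n))) = {E02 hn, E34 hn, P hn j} := h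
  have := h' ▸ (Finset.mem_insert_of_mem (Finset.mem_insert_of_mem
    (Finset.mem_singleton_self (P hn i))) : P hn i ∈ ({E02 hn, E34 hn, P hn i} : Finset _))
  simp only [Finset.mem_coe, T_mem] at hi hj
  simp only [Finset.mem_insert, Finset.mem_singleton, P, E02, E34, u0, u1, u2, u3, u4,
    Sym2.eq_iff, Fin.ext_iff] at this
  rcases this with ((⟨h1, -⟩ | ⟨h1, -⟩) | (⟨h1, -⟩ | ⟨h1, -⟩) | ((⟨-, h2⟩ | ⟨h1, -⟩))) <;>
    first | exact Fin.ext h2 | omega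

lemma card_quad_mem (hn : 6 ≤ n) {M : Finset (Sym2 (Fin n))} (h : M ∈ quad hn) :
    M.card = 2 := by
  simp only [quad, Finset.mem_insert, Finset.mem_singleton] at h
  rcases h with rfl | rfl | rfl | rfl <;>
    (rw [Finset.card_insert_of_notMem (by simp [Sym2.eq_iff, Fin.ext_iff]),
      Finset.card_singleton])

lemma card_img1_mem (hn : 6 ≤ n) {M : Finset (Sym2 (Fin n))} (h : M ∈ img1 hn) :
    M.card = 2 := by
  simp only [img1, Finset.mem_image] at h
  obtain ⟨i, -, rfl⟩ := h
  rw [Finset.card_insert_of_notMem (by simp [Sym2.eq_iff, Fin.ext_iff]),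
    Finset.card_singleton]

lemma card_img2_mem (hn : 6 ≤ n) {M : Finset (Sym2 (Fin n))} (h : M ∈ img2 hn) :
    M.card = 2 := by
  simp only [img2, Finset.mem_image] at h
  obtain ⟨i, -, rfl⟩ := h
  rw [Finset.card_insert_of_notMem (by simp [Sym2.eq_iff, Fin.ext_iff]),
    Finset.card_singleton]

lemma card_img3_mem (hn : 6 ≤ n) {M : Finset (Sym2 (Fin n))} (h : M ∈ img3 hn) :
    M.card = 3 := by
  simp only [img3, Finset.mem_image] at h
  obtain ⟨i, -, rfl⟩ := h
  rw [Finset.card_insert_of_notMem (by simp [Sym2.eq_iff, Fin.ext_iff]),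
    Finset.card_insert_of_notMem (by simp [Sym2.eq_iff, Fin.ext_iff]),
    Finset.card_singleton]

lemma disj_quad_img1 (hn : 6 ≤ n) : Disjoint (quad hn) (img1 hn) := by
  rw [Finset.disjoint_left]
  intro M h1 h2
  simp only [img1, Finset.mem_image] at h2
  obtain ⟨i, hi, rfl⟩ := h2
  rw [T_mem] at hi
  simp only [quad, Finset.mem_insert, Finset.mem_singleton] at h1
  rcases h1 with h | h | h | h <;>
    (have := h ▸ Finset.mem_insert_self (P hn i) _;
     simp only [Finset.mem_insert, Finset.mem_singleton, P, E01, E12, E34, E03, E04,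
       u0, u1, u2, u3, u4, Sym2.eq_iff, Fin.ext_iff] at this <;> omega)

lemma disj_quad_img2 (hn : 6 ≤ n) : Disjoint (quad hn) (img2 hn) := by
  rw [Finset.disjoint_left]
  intro M h1 h2
  simp only [img2, Finset.mem_image] at h2
  obtain ⟨i, hi, rfl⟩ := h2
  rw [T_mem] at hi
  simp only [quad, Finset.mem_insert, Finset.mem_singleton] at h1
  rcases h1 with h | h | h | h <;>
    (have := h ▸ Finset.mem_insert_self (P hn i) _;
     simp only [Finset.mem_insert, Finset.mem_singleton, P, E01, E12, E34, E03, E04,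
       u0, u1, u2, u3, u4, Sym2.eq_iff, Fin.ext_iff] at this <;> omega)

lemma disj_img1_img2 (hn : 6 ≤ n) : Disjoint (img1 hn) (img2 hn) := by
  rw [Finset.disjoint_left]
  intro M h1 h2
  simp only [img1, Finset.mem_image] at h1
  simp only [img2, Finset.mem_image] at h2
  obtain ⟨i, hi, rfl⟩ := h1
  obtain ⟨j, hj, h⟩ := h2
  have h' : ({P hn j, E04 hn} : Finset (Sym2 (Fin n))) = {P hn i, E03 hn} := h
  have := h' ▸ (Finset.mem_insert_of_mem (Finset.mem_singleton_self (E04 hn)) :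
    E04 hn ∈ ({P hn j, E04 hn} : Finset (Sym2 (Fin n))))
  simp only [Finset.mem_coe, T_mem] at hi hj
  simp only [Finset.mem_insert, Finset.mem_singleton, P, E03, E04,
    u0, u1, u3, u4, Sym2.eq_iff, Fin.ext_iff] at this <;> omega
end R33proof

open R33proof

theorem stmt4 (n : ℕ) (hn : 6 ≤ n) :
    ((maximalMatchings (R33 n)).filter fun M => M.card = 2).card = 2 * (n - 5) + 4 ∧
    ((maximalMatchings (R33 n)).filter fun M => M.card = 3).card = n - 5 ∧
    (∀ M ∈ maximalMatchings (R33 n), M.card = 2 ∨ M.card = 3) ∧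
    avm (R33 n) = (7 * (n : ℚ) - 27) / (3 * (n : ℚ) - 11) := by
  have hkey := key hn
  have hF2 : (maximalMatchings (R33 n)).filter (fun M => M.card = 2) =
      quad hn ∪ img1 hn ∪ img2 hn := by
    rw [hkey]
    ext M
    simp only [Finset.mem_filter, Finset.mem_union]
    constructor
    · rintro ⟨h, hc⟩
      rcases h with ((h | h) | h) | h
      · exact Or.inl (Or.inl h)
      · exact Or.inl (Or.inr h)
      · exact Or.inr h
      · rw [card_img3_mem hn h] at hc; omega
    · intro h
      refine ⟨Or.inl h, ?_⟩
      rcases h with (h | h) | h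
      · exact card_quad_mem hn h
      · exact card_img1_mem hn h
      · exact card_img2_mem hn h
  have hF3 : (maximalMatchings (R33 n)).filter (fun M => M.card = 3) = img3 hn := by
    rw [hkey]
    ext M
    simp only [Finset.mem_filter, Finset.mem_union]
    constructor
    · rintro ⟨h, hc⟩
      rcases h with ((h | h) | h) | h
      · rw [card_quad_mem hn h] at hc; omega
      · rw [card_img1_mem hn h] at hc; omega
      · rw [card_img2_mem hn h] at hc; omega
      · exact h
    · intro h
      exact ⟨Or.inr h, card_img3_mem hn h⟩
  have hcard2 : (quad hn ∪ img1 hn ∪ img2 hn).card = 2 * (n - 5) + 4 := by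
    rw [Finset.card_union_of_disjoint
        (Finset.disjoint_union_left.2 ⟨disj_quad_img2 hn, disj_img1_img2 hn⟩),
      Finset.card_union_of_disjoint (disj_quad_img1 hn),
      quad_card hn, img1_card hn, img2_card hn]
    omega
  have hC2 : ((maximalMatchings (R33 n)).filter fun M => M.card = 2).card =
      2 * (n - 5) + 4 := by rw [hF2, hcard2]
  have hC3 : ((maximalMatchings (R33 n)).filter fun M => M.card = 3).card = n - 5 := by
    rw [hF3, img3_card hn]
  have h23 : ∀ M ∈ maximalMatchings (R33 n), M.card = 2 ∨ M.card = 3 := by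
    intro M hM
    rw [hkey] at hM
    rcases Finset.mem_union.1 hM with h | h
    · rcases Finset.mem_union.1 h with h | h
      · rcases Finset.mem_union.1 h with h | h
        · exact Or.inl (card_quad_mem hn h)
        · exact Or.inl (card_img1_mem hn h)
      · exact Or.inl (card_img2_mem hn h)
    · exact Or.inr (card_img3_mem hn h)
  have hd3 : Disjoint (quad hn ∪ img1 hn ∪ img2 hn) (img3 hn) := by
    rw [Finset.disjoint_left]
    intro M h1 h2
    have c2 : M.card = 2 := by
      rcases Finset.mem_union.1 h1 with h | h
      · rcases Finset.mem_union.1 h with h | h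
        · exact card_quad_mem hn h
        · exact card_img1_mem hn h
      · exact card_img2_mem hn h
    rw [card_img3_mem hn h2] at c2; omega
  have htot : (maximalMatchings (R33 n)).card = (2 * (n - 5) + 4) + (n - 5) := by
    rw [hkey, Finset.card_union_of_disjoint hd3, hcard2, img3_card hn]
  have hfiltneg : (maximalMatchings (R33 n)).filter (fun M => ¬M.card = 2) =
      (maximalMatchings (R33 n)).filter (fun M => M.card = 3) := by
    ext M
    simp only [Finset.mem_filter]
    constructor
    · rintro ⟨h, hc⟩
      rcases h23 M h with h2 | h3
      · exact absurd h2 hc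
      · exact ⟨h, h3⟩
    · rintro ⟨h, hc⟩
      exact ⟨h, by omega⟩
  have hs2 : ∑ M ∈ (maximalMatchings (R33 n)).filter (fun M => M.card = 2),
      (M.card : ℚ) = ((2 * (n - 5) + 4 : ℕ) : ℚ) * 2 := by
    calc ∑ M ∈ (maximalMatchings (R33 n)).filter (fun M => M.card = 2), (M.card : ℚ)
        = ∑ _M ∈ (maximalMatchings (R33 n)).filter (fun M => M.card = 2), (2 : ℚ) :=
          Finset.sum_congr rfl (fun M hM => by
            rw [(Finset.mem_filter.1 hM).2]; norm_num)
      _ = ((2 * (n - 5) + 4 : ℕ) : ℚ) * 2 := by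
          rw [Finset.sum_const, hC2, nsmul_eq_mul]
  have hs3 : ∑ M ∈ (maximalMatchings (R33 n)).filter (fun M => M.card = 3),
      (M.card : ℚ) = ((n - 5 : ℕ) : ℚ) * 3 := by
    calc ∑ M ∈ (maximalMatchings (R33 n)).filter (fun M => M.card = 3), (M.card : ℚ)
        = ∑ _M ∈ (maximalMatchings (R33 n)).filter (fun M => M.card = 3), (3 : ℚ) :=
          Finset.sum_congr rfl (fun M hM => by
            rw [(Finset.mem_filter.1 hM).2]; norm_num)
      _ = ((n - 5 : ℕ) : ℚ) * 3 := by
          rw [Finset.sum_const, hC3, nsmul_eq_mul]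
  have hsum : ∑ M ∈ maximalMatchings (R33 n), (M.card : ℚ) = 7 * (n : ℚ) - 27 := by
    rw [← Finset.sum_filter_add_sum_filter_not (maximalMatchings (R33 n))
      (fun M => M.card = 2) (fun M => (M.card : ℚ)), hfiltneg, hs2, hs3]
    have h5 : (5 : ℕ) ≤ n := by omega
    push_cast [Nat.cast_sub h5]
    ring
  have hcardQ : ((maximalMatchings (R33 n)).card : ℚ) = 3 * (n : ℚ) - 11 := by
    rw [htot]
    have h5 : (5 : ℕ) ≤ n := by omega
    push_cast [Nat.cast_sub h5]
    ring
  refine ⟨hC2, hC3, h23, ?_⟩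
  rw [avm, hsum, hcardQ]
end

section
/- In any connected bicyclic graph G whose cycles C_p and C_q (with p ≥ 6 and q = 3) share exactly one vertex, there is no maximal matching of size 2, and consequently avm(G) ≥ 3. -/
open scoped Classical

section Aux

variable {V : Type*}

lemma aux_walk_filter_edges [DecidableEq V] (G : SimpleGraph V) {u w : V} (p : G.Walk u w)
    (v : V) :
    (p.edges.filter (fun e => v ∈ e)).length
      = p.support.dropLast.count v + p.support.tail.count v := by
  induction p with
  | nil => simp
  | @cons a b c h q ih =>
    rw [SimpleGraph.Walk.edges_cons, SimpleGraph.Walk.support_cons]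
    rw [List.dropLast_cons_of_ne_nil q.support_ne_nil, List.tail_cons]
    have hq : q.support = b :: q.support.tail := by cases q <;> simp
    have h2 : q.support.count v = q.support.tail.count v + (if b = v then 1 else 0) := by
      conv_lhs => rw [hq, List.count_cons]
      simp only [beq_iff_eq]
    have h3 : (List.filter (fun e => decide (v ∈ e)) (s(a,b) :: q.edges)).length
        = (if v ∈ s(a,b) then 1 else 0)
          + (List.filter (fun e => decide (v ∈ e)) q.edges).length := by
      by_cases hm : v ∈ s(a,b) <;> simp [List.filter_cons, hm, Nat.add_comm]
    have hab : a ≠ b := h.ne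
    have h4 : (if v ∈ s(a,b) then 1 else 0)
        = (if a = v then 1 else 0) + (if b = v then 1 else 0) := by
      rcases eq_or_ne v a with rfl | hva
      · rcases eq_or_ne v b with rfl | hvb
        · exact (h.ne rfl).elim
        · simp [Sym2.mem_iff, hvb, Ne.symm hvb]
      · rcases eq_or_ne v b with rfl | hvb
        · simp [Sym2.mem_iff, hva, Ne.symm hva]
        · simp [Sym2.mem_iff, hva, hvb, Ne.symm hva, Ne.symm hvb]
    rw [List.filter_cons] at h3 ⊢
    rw [h3, h4, ih, List.count_cons, h2]
    simp only [beq_iff_eq]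
    omega

lemma aux_not_mem_dropLast_getLast {α : Type*} {l : List α} (hl : l.Nodup) (hne : l ≠ []) :
    l.getLast hne ∉ l.dropLast := by
  intro hmem
  have h1 := List.dropLast_append_getLast hne
  rw [← h1] at hl
  rcases List.nodup_append'.mp hl with ⟨-, -, hdisj⟩
  exact hdisj hmem (by simp)

lemma aux_cycle_filter_le_two [DecidableEq V] {G : SimpleGraph V} {u : V} {c : G.Walk u u}
    (hc : c.IsCycle) (v : V) :
    (c.edges.filter (fun e => v ∈ e)).length ≤ 2 := by
  cases c with
  | nil => simp
  | @cons _ b _ h q =>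
    have hnd : q.support.Nodup := by simpa using hc.support_nodup
    have hqne : q.support ≠ [] := q.support_ne_nil
    have hgl : q.support.getLast hqne = u := q.getLast_support
    have hmem : u ∉ q.support.dropLast := by
      have := aux_not_mem_dropLast_getLast hnd hqne
      rwa [hgl] at this
    rw [aux_walk_filter_edges G _ v, SimpleGraph.Walk.support_cons, List.tail_cons,
      List.dropLast_cons_of_ne_nil hqne, List.count_cons]
    have hc1 : q.support.count v ≤ 1 := List.nodup_iff_count_le_one.mp hnd v
    have hc2 : q.support.dropLast.count v ≤ q.support.count v :=
      (List.dropLast_sublist q.support).count_le v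
    simp only [beq_iff_eq]
    rcases eq_or_ne u v with rfl | hvu
    · have : q.support.dropLast.count u = 0 := List.count_eq_zero.mpr hmem
      rw [if_pos rfl]
      omega
    · rw [if_neg hvu]
      omega

lemma aux_cycle_edges_card [DecidableEq V] {G : SimpleGraph V} {u : V} {c : G.Walk u u}
    (hc : c.IsCycle) : c.edges.toFinset.card = c.length :=
  SimpleGraph.Walk.length_edges _ ▸ List.toFinset_card_of_nodup hc.edges_nodup

lemma aux_cycle_support_card [DecidableEq V] {G : SimpleGraph V} {u : V} {c : G.Walk u u}
    (hc : c.IsCycle) : c.support.toFinset.card = c.length := by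
  cases c with
  | nil => exact absurd rfl hc.ne_nil
  | @cons _ b _ h q =>
    have hnd : q.support.Nodup := by simpa using hc.support_nodup
    have hu : u ∈ q.support := q.end_mem_support
    rw [SimpleGraph.Walk.support_cons, List.toFinset_cons,
      Finset.insert_eq_self.mpr (by simpa using hu),
      List.toFinset_card_of_nodup hnd]
    simp [q.length_support]

lemma aux_exists_crossing_edge {G : SimpleGraph V} (W : Finset V) [DecidableEq V]
    {x y : V} (p : G.Walk x y) :
    x ∈ W → y ∉ W → ∃ a b, G.Adj a b ∧ a ∈ W ∧ b ∉ W := by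
  induction p with
  | nil => exact fun hx hy => absurd hx hy
  | @cons a b c h q ih =>
    intro hx hy
    by_cases hb : b ∈ W
    · exact ih hb hy
    · exact ⟨a, b, h, hx, hb⟩

lemma aux_edge_count_lower [Fintype V] [DecidableEq V] {G : SimpleGraph V}
    (hconn : G.Connected) :
    ∀ (k : ℕ) (W : Finset V) (A : Finset (Sym2 V)), W.Nonempty →
      A ⊆ G.edgeFinset → (∀ e ∈ A, ∀ v ∈ e, v ∈ W) →
      Fintype.card V - W.card ≤ k →
      A.card + (Fintype.card V - W.card) ≤ G.edgeFinset.card := by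
  intro k
  induction k with
  | zero =>
    intro W A hW hA hAW hk
    have : Fintype.card V - W.card = 0 := Nat.le_zero.mp hk
    rw [this]
    simpa using Finset.card_le_card hA
  | succ k ih =>
    intro W A hW hA hAW hk
    by_cases huniv : W = Finset.univ
    · have : Fintype.card V - W.card = 0 := by simp [huniv]
      rw [this]
      simpa using Finset.card_le_card hA
    · obtain ⟨y, hy⟩ : ∃ y, y ∉ W := by
        by_contra hcon
        push_neg at hcon
        exact huniv (Finset.eq_univ_iff_forall.mpr hcon)
      obtain ⟨x, hx⟩ := hW
      obtain ⟨p⟩ := hconn.preconnected x y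
      obtain ⟨a, b, hab, haW, hbW⟩ := aux_exists_crossing_edge W p hx hy
      have hcardlt : W.card < Fintype.card V := by
        have := Finset.card_lt_card (Finset.ssubset_univ_iff.mpr huniv)
        simpa using this
      have hstep := ih (insert b W) (insert s(a, b) A) ⟨x, Finset.mem_insert_of_mem hx⟩
        (by
          intro e he
          rcases Finset.mem_insert.mp he with rfl | he
          · rwa [SimpleGraph.mem_edgeFinset, SimpleGraph.mem_edgeSet]
          · exact hA he)
        (by
          intro e he v hv
          rcases Finset.mem_insert.mp he with rfl | he
          · rcases Sym2.mem_iff.mp hv with rfl | rfl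
            · exact Finset.mem_insert_of_mem haW
            · exact Finset.mem_insert_self _ _
          · exact Finset.mem_insert_of_mem (hAW e he v hv))
        (by
          rw [Finset.card_insert_of_notMem hbW]
          omega)
      have hnotmem : s(a, b) ∉ A := by
        intro hmem
        exact hbW (hAW _ hmem b (Sym2.mem_mk_right a b))
      rw [Finset.card_insert_of_notMem hnotmem, Finset.card_insert_of_notMem hbW] at hstep
      omega

lemma aux_finset_filter_card_le_list {α : Type*} [DecidableEq α] (l : List α) (P : α → Prop)
    [DecidablePred P] :
    (l.toFinset.filter P).card ≤ (l.filter (fun a => decide (P a))).length := by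
  refine le_trans (Finset.card_le_card ?_) (List.toFinset_card_le _)
  intro x hx
  rcases Finset.mem_filter.mp hx with ⟨hx1, hx2⟩
  rw [List.mem_toFinset, List.mem_filter]
  exact ⟨List.mem_toFinset.mp hx1, by simpa using hx2⟩

lemma aux_cycle_finset_filter_le_two [DecidableEq V] {G : SimpleGraph V} {u : V}
    {c : G.Walk u u} (hc : c.IsCycle) (v : V) :
    (c.edges.toFinset.filter (fun e => v ∈ e)).card ≤ 2 :=
  le_trans (aux_finset_filter_card_le_list _ _) (aux_cycle_filter_le_two hc v)

lemma aux_mem_support_of_mem_edges {G : SimpleGraph V} {a b : V} {p : G.Walk a b} {e : Sym2 V}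
    (he : e ∈ p.edges) {v : V} (hv : v ∈ e) : v ∈ p.support := by
  rw [← Sym2.other_spec hv] at he
  exact p.fst_mem_support_of_mem_edges he

lemma aux_cycle_sum_le [DecidableEq V] {G : SimpleGraph V} {u : V} {c : G.Walk u u}
    (hc : c.IsCycle) (T : Finset V) :
    ∑ e ∈ c.edges.toFinset, (T.filter (· ∈ e)).card ≤ 2 * T.card := by
  have hswap : ∑ e ∈ c.edges.toFinset, (T.filter (· ∈ e)).card
      = ∑ v ∈ T, (c.edges.toFinset.filter (fun e => v ∈ e)).card := by
    simp only [Finset.card_filter]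
    exact Finset.sum_comm
  rw [hswap]
  calc ∑ v ∈ T, (c.edges.toFinset.filter (fun e => v ∈ e)).card
      ≤ ∑ _v ∈ T, 2 := Finset.sum_le_sum fun v _ => aux_cycle_finset_filter_le_two hc v
    _ = 2 * T.card := by simp [Nat.mul_comm]

lemma aux_cover_sum_ge {V : Type*} [DecidableEq V] (E : Finset (Sym2 V))
    (T : Finset V) (hcov : ∀ e ∈ E, ∃ v ∈ T, v ∈ e) :
    E.card ≤ ∑ e ∈ E, (T.filter (· ∈ e)).card := by
  rw [Finset.card_eq_sum_ones]
  refine Finset.sum_le_sum fun e he => ?_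
  obtain ⟨v, hv, hr⟩ := hcov e he
  exact Finset.card_pos.mpr ⟨v, Finset.mem_filter.mpr ⟨hv, hr⟩⟩

lemma aux_cover_sum_ge_strict {V : Type*} [DecidableEq V] (E : Finset (Sym2 V))
    (T : Finset V) (hcov : ∀ e ∈ E, ∃ v ∈ T, v ∈ e)
    {e₀ : Sym2 V} (he₀ : e₀ ∈ E) (h2 : 2 ≤ (T.filter (· ∈ e₀)).card) :
    E.card + 1 ≤ ∑ e ∈ E, (T.filter (· ∈ e)).card := by
  have := Finset.sum_lt_sum (s := E) (f := fun _ => 1)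
    (g := fun e => (T.filter (· ∈ e)).card)
    (fun e he => by
      obtain ⟨v, hv, hr⟩ := hcov e he
      exact Finset.card_pos.mpr ⟨v, Finset.mem_filter.mpr ⟨hv, hr⟩⟩)
    ⟨e₀, he₀, h2⟩
  simpa using this

lemma aux_sym2_filter_card_le [Fintype V] [DecidableEq V] (e : Sym2 V) :
    (Finset.univ.filter (· ∈ e)).card ≤ 2 := by
  induction e using Sym2.ind with
  | _ a b =>
    have hsub : (Finset.univ.filter (· ∈ s(a, b))) ⊆ {a, b} := by
      intro v hv
      rcases Sym2.mem_iff.mp (Finset.mem_filter.mp hv).2 with rfl | rfl <;> simp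
    exact le_trans (Finset.card_le_card hsub) ((Finset.card_insert_le a {b}).trans (by simp))

end Aux

section Key

variable {V : Type*} [Fintype V] [DecidableEq V]

lemma key_lemma (G : SimpleGraph V)
    (hconn : G.Connected) (hsize : G.edgeFinset.card = Fintype.card V + 1)
    (u₁ u₂ : V) (c₁ : G.Walk u₁ u₁) (c₂ : G.Walk u₂ u₂)
    (hc₁ : c₁.IsCycle) (hc₂ : c₂.IsCycle)
    (hp : 6 ≤ c₁.length) (hq : c₂.length = 3)
    (hshare : (c₁.support.toFinset ∩ c₂.support.toFinset).card = 1)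
    (M : Finset (Sym2 V)) (hM : IsMaximalMatching G M) : 3 ≤ M.card := by
  by_contra hlt
  push_neg at hlt
  have hM2 : M.card ≤ 2 := by omega
  set S : Finset V := M.biUnion (fun e => Finset.univ.filter (· ∈ e)) with hSdef
  have hmemS : ∀ v : V, v ∈ S ↔ ∃ e ∈ M, v ∈ e := by
    intro v
    simp [hSdef]
  have hScard : S.card ≤ 2 * M.card := by
    refine le_trans (Finset.card_biUnion_le) ?_
    calc ∑ e ∈ M, (Finset.univ.filter (· ∈ e)).card
        ≤ ∑ _e ∈ M, 2 := Finset.sum_le_sum fun e _ => aux_sym2_filter_card_le e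
      _ = 2 * M.card := by simp [Nat.mul_comm]
  -- S is a vertex cover
  have hcover : ∀ e ∈ G.edgeSet, ∃ v ∈ S, v ∈ e := by
    by_contra hcon
    push_neg at hcon
    obtain ⟨e, heE, hnov⟩ := hcon
    have hmatch' : IsMatchingSet G (insert e M) := by
      constructor
      · rw [Finset.coe_insert]
        exact Set.insert_subset heE hM.1.1
      · rw [Finset.coe_insert]
        haveI : Std.Symm (fun e f : Sym2 V => ∀ v : V, ¬(v ∈ e ∧ v ∈ f)) := ⟨by
          intro x y hxy v hv
          exact hxy v ⟨hv.2, hv.1⟩⟩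
        refine (Set.pairwise_insert_of_symm).mpr ⟨hM.1.2, ?_⟩
        · intro f hf _ v hv
          exact hnov v ((hmemS v).mpr ⟨f, hf, hv.2⟩) hv.1
    have heq := hM.2 (insert e M) hmatch' (Finset.subset_insert _ _)
    have heM : e ∈ M := heq ▸ Finset.mem_insert_self e M
    obtain ⟨a, ha⟩ : ∃ a, a ∈ e := by
      induction e using Sym2.ind with
      | _ x y => exact ⟨x, Sym2.mem_mk_left x y⟩
    exact hnov a ((hmemS a).mpr ⟨e, heM, ha⟩) ha
  set s₁ : Finset V := c₁.support.toFinset with hs₁def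
  set s₂ : Finset V := c₂.support.toFinset with hs₂def
  set E₁ : Finset (Sym2 V) := c₁.edges.toFinset with hE₁def
  set E₂ : Finset (Sym2 V) := c₂.edges.toFinset with hE₂def
  set T₁ : Finset V := S ∩ s₁ with hT₁def
  set T₂ : Finset V := S ∩ s₂ with hT₂def
  have hcov₁ : ∀ e ∈ E₁, ∃ v ∈ T₁, v ∈ e := by
    intro e he
    rw [hE₁def, List.mem_toFinset] at he
    obtain ⟨v, hvS, hve⟩ := hcover e (c₁.edges_subset_edgeSet he)
    exact ⟨v, Finset.mem_inter.mpr ⟨hvS,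
      List.mem_toFinset.mpr (aux_mem_support_of_mem_edges he hve)⟩, hve⟩
  have hcov₂ : ∀ e ∈ E₂, ∃ v ∈ T₂, v ∈ e := by
    intro e he
    rw [hE₂def, List.mem_toFinset] at he
    obtain ⟨v, hvS, hve⟩ := hcover e (c₂.edges_subset_edgeSet he)
    exact ⟨v, Finset.mem_inter.mpr ⟨hvS,
      List.mem_toFinset.mpr (aux_mem_support_of_mem_edges he hve)⟩, hve⟩
  have hE₁card : E₁.card = c₁.length := aux_cycle_edges_card hc₁
  have hE₂card : E₂.card = 3 := by rw [hE₂def, aux_cycle_edges_card hc₂, hq]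
  have hsum₁ : ∑ e ∈ E₁, (T₁.filter (· ∈ e)).card ≤ 2 * T₁.card := aux_cycle_sum_le hc₁ T₁
  have hlen₁ : c₁.length ≤ 2 * T₁.card := by
    have h1 : E₁.card ≤ ∑ e ∈ E₁, (T₁.filter (· ∈ e)).card :=
      aux_cover_sum_ge E₁ T₁ hcov₁
    omega
  have hlen₂ : 3 ≤ 2 * T₂.card := by
    have h1 : E₂.card ≤ ∑ e ∈ E₂, (T₂.filter (· ∈ e)).card :=
      aux_cover_sum_ge E₂ T₂ hcov₂
    have h2 : ∑ e ∈ E₂, (T₂.filter (· ∈ e)).card ≤ 2 * T₂.card := aux_cycle_sum_le hc₂ T₂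
    omega
  have hUI := Finset.card_union_add_card_inter T₁ T₂
  have hUS : (T₁ ∪ T₂).card ≤ S.card :=
    Finset.card_le_card (Finset.union_subset Finset.inter_subset_left Finset.inter_subset_left)
  have hIsub : T₁ ∩ T₂ ⊆ s₁ ∩ s₂ := by
    intro v hv
    rw [Finset.mem_inter] at hv ⊢
    exact ⟨(Finset.mem_inter.mp hv.1).2, (Finset.mem_inter.mp hv.2).2⟩
  have hI1 : (T₁ ∩ T₂).card ≤ 1 := le_trans (Finset.card_le_card hIsub) (le_of_eq hshare)
  have hT₁3 : T₁.card = 3 := by omega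
  have hT₂2 : T₂.card = 2 := by omega
  have hS4 : S.card = 4 := by omega
  have hMc2 : M.card = 2 := by omega
  have hlen6 : c₁.length = 6 := by omega
  have hI1' : (T₁ ∩ T₂).card = 1 := by omega
  obtain ⟨w, hw⟩ := Finset.card_eq_one.mp hI1'
  have hwTT : w ∈ T₁ ∩ T₂ := hw ▸ Finset.mem_singleton_self w
  have hwT₁ : w ∈ T₁ := (Finset.mem_inter.mp hwTT).1
  have hwT₂ : w ∈ T₂ := (Finset.mem_inter.mp hwTT).2
  have hwS : w ∈ S := (Finset.mem_inter.mp hwT₁).1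
  have hws₁ : w ∈ s₁ := (Finset.mem_inter.mp hwT₁).2
  have hws₂ : w ∈ s₂ := (Finset.mem_inter.mp hwT₂).2
  have hs₁s₂ : s₁ ∩ s₂ = {w} := by
    obtain ⟨w', hw'⟩ := Finset.card_eq_one.mp hshare
    have hwmem : w ∈ s₁ ∩ s₂ := Finset.mem_inter.mpr ⟨hws₁, hws₂⟩
    rw [hw'] at hwmem
    rw [Finset.mem_singleton] at hwmem
    rw [hw', hwmem]
  -- extract x, y from T₁ and t from T₂
  have hT₁e : (T₁.erase w).card = 2 := by
    rw [Finset.card_erase_of_mem hwT₁, hT₁3]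
  obtain ⟨x, y, hxy, hexy⟩ := Finset.card_eq_two.mp hT₁e
  have hxmem : x ∈ T₁.erase w := by rw [hexy]; simp
  have hymem : y ∈ T₁.erase w := by rw [hexy]; simp
  have hxT₁ : x ∈ T₁ := Finset.mem_of_mem_erase hxmem
  have hyT₁ : y ∈ T₁ := Finset.mem_of_mem_erase hymem
  have hxw : x ≠ w := Finset.ne_of_mem_erase hxmem
  have hyw : y ≠ w := Finset.ne_of_mem_erase hymem
  have hxS : x ∈ S := (Finset.mem_inter.mp hxT₁).1
  have hyS : y ∈ S := (Finset.mem_inter.mp hyT₁).1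
  have hxs₁ : x ∈ s₁ := (Finset.mem_inter.mp hxT₁).2
  have hys₁ : y ∈ s₁ := (Finset.mem_inter.mp hyT₁).2
  have hT₂e : (T₂.erase w).card = 1 := by
    rw [Finset.card_erase_of_mem hwT₂, hT₂2]
  obtain ⟨t, ht⟩ := Finset.card_eq_one.mp hT₂e
  have htmem : t ∈ T₂.erase w := by rw [ht]; simp
  have htT₂ : t ∈ T₂ := Finset.mem_of_mem_erase htmem
  have htw : t ≠ w := Finset.ne_of_mem_erase htmem
  have htS : t ∈ S := (Finset.mem_inter.mp htT₂).1
  have hts₂ : t ∈ s₂ := (Finset.mem_inter.mp htT₂).2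
  have htns₁ : t ∉ s₁ := by
    intro hmem
    have : t ∈ s₁ ∩ s₂ := Finset.mem_inter.mpr ⟨hmem, hts₂⟩
    rw [hs₁s₂, Finset.mem_singleton] at this
    exact htw this
  have htx : t ≠ x := fun h => htns₁ (h ▸ hxs₁)
  have hty : t ≠ y := fun h => htns₁ (h ▸ hys₁)
  -- S = {w, x, y, t}
  have hquadsub : ({w, x, y, t} : Finset V) ⊆ S := by
    intro v hv
    simp only [Finset.mem_insert, Finset.mem_singleton] at hv
    rcases hv with rfl | rfl | rfl | rfl
    exacts [hwS, hxS, hyS, htS]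
  have hquadcard : ({w, x, y, t} : Finset V).card = 4 := by
    rw [Finset.card_insert_of_notMem (by simp [Ne.symm hxw, Ne.symm hyw, Ne.symm htw]),
      Finset.card_insert_of_notMem (by simp [hxy, Ne.symm htx]),
      Finset.card_insert_of_notMem (by simp [Ne.symm hty]),
      Finset.card_singleton]
  have hSeq : ({w, x, y, t} : Finset V) = S :=
    Finset.eq_of_subset_of_card_le hquadsub (by omega)
  -- no edge of c₁ contains two distinct elements of T₁
  have hnodouble : ∀ a b : V, a ∈ T₁ → b ∈ T₁ → a ≠ b → s(a, b) ∉ E₁ := by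
    intro a b ha hb hab hmem
    have h2' : 2 ≤ (T₁.filter (· ∈ s(a, b))).card := by
      have hsub : ({a, b} : Finset V) ⊆ T₁.filter (· ∈ s(a, b)) := by
        intro v hv
        simp only [Finset.mem_insert, Finset.mem_singleton] at hv
        rcases hv with rfl | rfl
        · exact Finset.mem_filter.mpr ⟨ha, Sym2.mem_mk_left _ _⟩
        · exact Finset.mem_filter.mpr ⟨hb, Sym2.mem_mk_right _ _⟩
      calc 2 = ({a, b} : Finset V).card := (Finset.card_pair hab).symm
        _ ≤ _ := Finset.card_le_card hsub
    have hstrict : E₁.card + 1 ≤ ∑ e ∈ E₁, (T₁.filter (· ∈ e)).card :=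
      aux_cover_sum_ge_strict E₁ T₁ hcov₁ hmem h2'
    omega
  -- final contradiction from an extra edge inside s₁ between two elements of T₁
  have final : ∀ a b : V, a ∈ T₁ → b ∈ T₁ → a ≠ b → s(a, b) ∈ G.edgeSet → False := by
    intro a b ha hb hab hedge
    have has₁ : a ∈ s₁ := (Finset.mem_inter.mp ha).2
    have hbs₁ : b ∈ s₁ := (Finset.mem_inter.mp hb).2
    have hnotE₁ : s(a, b) ∉ E₁ := hnodouble a b ha hb hab
    have hnotE₂ : s(a, b) ∉ E₂ := by
      intro hmem
      rw [hE₂def, List.mem_toFinset] at hmem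
      have has₂ : a ∈ s₂ := List.mem_toFinset.mpr
        (aux_mem_support_of_mem_edges hmem (Sym2.mem_mk_left a b))
      have hbs₂ : b ∈ s₂ := List.mem_toFinset.mpr
        (aux_mem_support_of_mem_edges hmem (Sym2.mem_mk_right a b))
      have ha' : a ∈ s₁ ∩ s₂ := Finset.mem_inter.mpr ⟨has₁, has₂⟩
      have hb' : b ∈ s₁ ∩ s₂ := Finset.mem_inter.mpr ⟨hbs₁, hbs₂⟩
      rw [hs₁s₂, Finset.mem_singleton] at ha' hb'
      exact hab (ha'.trans hb'.symm)
    have hdisjE : Disjoint E₁ E₂ := by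
      rw [Finset.disjoint_left]
      intro e he₁ he₂
      induction e using Sym2.ind with
      | _ p' q' =>
        rw [hE₁def, List.mem_toFinset] at he₁
        rw [hE₂def, List.mem_toFinset] at he₂
        have hp₁ : p' ∈ s₁ := List.mem_toFinset.mpr
          (aux_mem_support_of_mem_edges he₁ (Sym2.mem_mk_left p' q'))
        have hq₁ : q' ∈ s₁ := List.mem_toFinset.mpr
          (aux_mem_support_of_mem_edges he₁ (Sym2.mem_mk_right p' q'))
        have hp₂ : p' ∈ s₂ := List.mem_toFinset.mpr
          (aux_mem_support_of_mem_edges he₂ (Sym2.mem_mk_left p' q'))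
        have hq₂ : q' ∈ s₂ := List.mem_toFinset.mpr
          (aux_mem_support_of_mem_edges he₂ (Sym2.mem_mk_right p' q'))
        have hp' : p' ∈ s₁ ∩ s₂ := Finset.mem_inter.mpr ⟨hp₁, hp₂⟩
        have hq' : q' ∈ s₁ ∩ s₂ := Finset.mem_inter.mpr ⟨hq₁, hq₂⟩
        rw [hs₁s₂, Finset.mem_singleton] at hp' hq'
        have hadj : G.Adj p' q' := c₁.edges_subset_edgeSet he₁
        exact hadj.ne (hp'.trans hq'.symm)
    have hAcard : (insert s(a, b) (E₁ ∪ E₂)).card = 10 := by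
      rw [Finset.card_insert_of_notMem (by simp [hnotE₁, hnotE₂]),
        Finset.card_union_of_disjoint hdisjE]
      omega
    have hWcard : (s₁ ∪ s₂).card = 8 := by
      have := Finset.card_union_add_card_inter s₁ s₂
      rw [hs₁s₂] at this
      have h1 : s₁.card = 6 := by rw [hs₁def, aux_cycle_support_card hc₁, hlen6]
      have h2 : s₂.card = 3 := by rw [hs₂def, aux_cycle_support_card hc₂, hq]
      simp only [Finset.card_singleton] at this
      omega
    have hbound := aux_edge_count_lower hconn (Fintype.card V) (s₁ ∪ s₂)
      (insert s(a, b) (E₁ ∪ E₂))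
      ⟨w, Finset.mem_union_left _ hws₁⟩
      (by
        intro e he
        rcases Finset.mem_insert.mp he with rfl | he
        · rwa [SimpleGraph.mem_edgeFinset]
        · rcases Finset.mem_union.mp he with he | he
          · rw [SimpleGraph.mem_edgeFinset]
            rw [hE₁def, List.mem_toFinset] at he
            exact c₁.edges_subset_edgeSet he
          · rw [SimpleGraph.mem_edgeFinset]
            rw [hE₂def, List.mem_toFinset] at he
            exact c₂.edges_subset_edgeSet he)
      (by
        intro e he v hv
        rcases Finset.mem_insert.mp he with rfl | he
        · rcases Sym2.mem_iff.mp hv with rfl | rfl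
          · exact Finset.mem_union_left _ has₁
          · exact Finset.mem_union_left _ hbs₁
        · rcases Finset.mem_union.mp he with he | he
          · rw [hE₁def, List.mem_toFinset] at he
            exact Finset.mem_union_left _
              (List.mem_toFinset.mpr (aux_mem_support_of_mem_edges he hv))
          · rw [hE₂def, List.mem_toFinset] at he
            exact Finset.mem_union_right _
              (List.mem_toFinset.mpr (aux_mem_support_of_mem_edges he hv)))
      (by omega)
    have hW8 : (s₁ ∪ s₂).card ≤ Fintype.card V := Finset.card_le_univ _
    rw [hAcard, hWcard, hsize] at hbound
    rw [hWcard] at hW8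
    omega
  -- now find the extra edge
  obtain ⟨e, heM, hwe⟩ := (hmemS w).mp hwS
  have heE : e ∈ G.edgeSet := hM.1.1 heM
  have hez : s(w, Sym2.Mem.other hwe) = e := Sym2.other_spec hwe
  set z := Sym2.Mem.other hwe with hzdef
  have hze : z ∈ e := Sym2.other_mem hwe
  have hadj : G.Adj w z := by
    rw [← hez] at heE
    exact (SimpleGraph.mem_edgeSet G).mp heE
  have hzw : z ≠ w := hadj.ne'
  have hzS : z ∈ S := (hmemS z).mpr ⟨e, heM, hze⟩
  rw [← hSeq] at hzS
  simp only [Finset.mem_insert, Finset.mem_singleton] at hzS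
  rcases hzS with hz | hz | hz | hz
  · exact hzw hz
  · -- z = x : extra edge s(w, x)
    exact final w x hwT₁ hxT₁ (Ne.symm hxw) (by rw [← hz]; exact hadj)
  · exact final w y hwT₁ hyT₁ (Ne.symm hyw) (by rw [← hz]; exact hadj)
  · -- z = t : the other matching edge joins x and y
    have hte : t ∈ e := hz ▸ hze
    have hMe : (M.erase e).card = 1 := by
      rw [Finset.card_erase_of_mem heM, hMc2]
    obtain ⟨f, hf⟩ := Finset.card_eq_one.mp hMe
    have hfMe : f ∈ M.erase e := hf ▸ Finset.mem_singleton_self f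
    have hfM : f ∈ M := Finset.mem_of_mem_erase hfMe
    have hfe : f ≠ e := Finset.ne_of_mem_erase hfMe
    have hfE : f ∈ G.edgeSet := hM.1.1 hfM
    have hdisj : ∀ v : V, ¬(v ∈ f ∧ v ∈ e) :=
      hM.1.2 (Finset.mem_coe.mpr hfM) (Finset.mem_coe.mpr heM) hfe
    induction f using Sym2.ind with
    | _ a b =>
      have hadj' : G.Adj a b := (SimpleGraph.mem_edgeSet G).mp hfE
      have haS : a ∈ S := (hmemS a).mpr ⟨_, hfM, Sym2.mem_mk_left a b⟩
      have hbS : b ∈ S := (hmemS b).mpr ⟨_, hfM, Sym2.mem_mk_right a b⟩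
      have haw : a ≠ w := fun h => hdisj w ⟨h ▸ Sym2.mem_mk_left a b, hwe⟩
      have hat : a ≠ t := fun h => hdisj t ⟨h ▸ Sym2.mem_mk_left a b, hte⟩
      have hbw : b ≠ w := fun h => hdisj w ⟨h ▸ Sym2.mem_mk_right a b, hwe⟩
      have hbt : b ≠ t := fun h => hdisj t ⟨h ▸ Sym2.mem_mk_right a b, hte⟩
      rw [← hSeq] at haS hbS
      simp only [Finset.mem_insert, Finset.mem_singleton] at haS hbS
      have haT₁ : a ∈ T₁ := by
        rcases haS with h | h | h | h
        · exact absurd h haw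
        · exact h ▸ hxT₁
        · exact h ▸ hyT₁
        · exact absurd h hat
      have hbT₁ : b ∈ T₁ := by
        rcases hbS with h | h | h | h
        · exact absurd h hbw
        · exact h ▸ hxT₁
        · exact h ▸ hyT₁
        · exact absurd h hbt
      exact final a b haT₁ hbT₁ hadj'.ne hfE

end Key

theorem stmt9 {V : Type*} [Fintype V] [DecidableEq V] (G : SimpleGraph V)
    (hconn : G.Connected) (hsize : G.edgeFinset.card = Fintype.card V + 1)
    (u₁ u₂ : V) (c₁ : G.Walk u₁ u₁) (c₂ : G.Walk u₂ u₂)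
    (hc₁ : c₁.IsCycle) (hc₂ : c₂.IsCycle)
    (hp : 6 ≤ c₁.length) (hq : c₂.length = 3)
    (hshare : (c₁.support.toFinset ∩ c₂.support.toFinset).card = 1) :
    (¬ ∃ M : Finset (Sym2 V), IsMaximalMatching G M ∧ M.card = 2) ∧
    3 ≤ avm G := by
  have key := key_lemma G hconn hsize u₁ u₂ c₁ c₂ hc₁ hc₂ hp hq hshare
  constructor
  · rintro ⟨M, hM, hcard⟩
    have := key M hM
    omega
  · -- maximalMatchings is nonempty
    have hPne : (G.edgeFinset.powerset.filter fun N => IsMatchingSet G N).Nonempty := by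
      refine ⟨∅, Finset.mem_filter.mpr ⟨Finset.mem_powerset.mpr (Finset.empty_subset _), ?_⟩⟩
      constructor
      · simp
      · simp [Set.pairwise_empty]
    obtain ⟨M₀, hM₀P, hmax⟩ := Finset.exists_max_image _ Finset.card hPne
    have hM₀match : IsMatchingSet G M₀ := (Finset.mem_filter.mp hM₀P).2
    have hM₀max : IsMaximalMatching G M₀ := by
      refine ⟨hM₀match, fun N hN hsub => ?_⟩
      have hNP : N ∈ G.edgeFinset.powerset.filter fun N => IsMatchingSet G N := by
        refine Finset.mem_filter.mpr ⟨Finset.mem_powerset.mpr ?_, hN⟩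
        intro x hx
        exact SimpleGraph.mem_edgeFinset.mpr (hN.1 hx)
      exact (Finset.eq_of_subset_of_card_le hsub (hmax N hNP)).symm
    have hmm : M₀ ∈ maximalMatchings G := by
      rw [maximalMatchings, Finset.mem_filter]
      refine ⟨Finset.mem_powerset.mpr ?_, hM₀max⟩
      intro x hx
      exact SimpleGraph.mem_edgeFinset.mpr (hM₀match.1 hx)
    have hcardpos : 0 < (maximalMatchings G).card := Finset.card_pos.mpr ⟨M₀, hmm⟩
    rw [avm, le_div_iff₀ (by exact_mod_cast hcardpos)]
    have hbig : ∀ N ∈ maximalMatchings G, (3 : ℚ) ≤ (N.card : ℚ) := by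
      intro N hN
      have := key N (Finset.mem_filter.mp hN).2
      exact_mod_cast this
    calc (3 : ℚ) * ((maximalMatchings G).card : ℚ)
        = ∑ _N ∈ maximalMatchings G, (3 : ℚ) := by
          rw [Finset.sum_const, nsmul_eq_mul, mul_comm]
      _ ≤ ∑ N ∈ maximalMatchings G, (N.card : ℚ) := Finset.sum_le_sum hbig
end

section
/- The graph T_n^1(3,3) on n ≥ 7 vertices (two triangles joined by a bridge v₃w₁, with k = n−6 ≥ 1 pendant edges attached to v₃) has exactly 6 maximal matchings of size 2 and exactly 3k+1 maximal matchings of size 3, and no others; hence avm(T_n^1(3,3)) = (9n−39)/(3n−11) = 3 − 6/(3n−11). -/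
open scoped Classical

/-- `T_n^1(3,3)`: two triangles `{0,1,2}` and `{3,4,5}` joined by the bridge
`2–3` (so `0 = v₁`, `1 = v₂`, `2 = v₃`, `3 = w₁`, `4 = w₂`, `5 = w₃`), and every
vertex `i` with `6 ≤ i` is a leaf attached to `v₃`. -/
def T33 (n : ℕ) : SimpleGraph (Fin n) :=
  SimpleGraph.fromRel fun x y =>
    ((x : ℕ) = 0 ∧ (y : ℕ) = 1) ∨ ((x : ℕ) = 0 ∧ (y : ℕ) = 2) ∨
    ((x : ℕ) = 1 ∧ (y : ℕ) = 2) ∨ ((x : ℕ) = 2 ∧ (y : ℕ) = 3) ∨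
    ((x : ℕ) = 3 ∧ (y : ℕ) = 4) ∨ ((x : ℕ) = 3 ∧ (y : ℕ) = 5) ∨
    ((x : ℕ) = 4 ∧ (y : ℕ) = 5) ∨ ((x : ℕ) = 2 ∧ 6 ≤ (y : ℕ))

namespace T33Aux

variable {n : ℕ}

/-- vertex `i` of `Fin n`, for `i < 7`. -/
def Vt (hn : 7 ≤ n) (i : ℕ) (h : i < 7 := by norm_num) : Fin n := ⟨i, by omega⟩

@[simp] lemma Vt_val (hn : 7 ≤ n) (i : ℕ) (h : i < 7) : ((Vt hn i h : Fin n) : ℕ) = i := rfl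

/-- the edge between vertices `i` and `j`. -/
def E (hn : 7 ≤ n) (i j : ℕ) (hi : i < 7 := by norm_num) (hj : j < 7 := by norm_num) :
    Sym2 (Fin n) := s(Vt hn i hi, Vt hn j hj)

@[simp] lemma E_eq_E (hn : 7 ≤ n) {i j k l : ℕ} {hi hj hk hl} :
    (E hn i j hi hj = E hn k l hk hl) ↔ ((i = k ∧ j = l) ∨ (i = l ∧ j = k)) := by
  simp [E, Sym2.eq_iff, Fin.ext_iff, Vt]

@[simp] lemma pendant_eq_E (hn : 7 ≤ n) {x : Fin n} {i j : ℕ} {hi hj} {h2 : (2:ℕ) < 7} :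
    (s(Vt hn 2 h2, x) = E hn i j hi hj) ↔ ((2 = i ∧ (x:ℕ) = j) ∨ (2 = j ∧ (x:ℕ) = i)) := by
  simp [E, Sym2.eq_iff, Fin.ext_iff, Vt]

@[simp] lemma E_eq_pendant (hn : 7 ≤ n) {x : Fin n} {i j : ℕ} {hi hj} {h2 : (2:ℕ) < 7} :
    (E hn i j hi hj = s(Vt hn 2 h2, x)) ↔ ((i = 2 ∧ j = (x:ℕ)) ∨ (i = (x:ℕ) ∧ j = 2)) := by
  simp [E, Sym2.eq_iff, Fin.ext_iff, Vt]

@[simp] lemma pendant_eq_pendant (hn : 7 ≤ n) {x y : Fin n} {h2 : (2:ℕ) < 7} :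
    (s(Vt hn 2 h2, x) = s(Vt hn 2 h2, y)) ↔ ((x:ℕ) = (y:ℕ) ∨ ((x:ℕ) = 2 ∧ (y:ℕ) = 2)) := by
  simp [Sym2.eq_iff, Fin.ext_iff, Vt]
  constructor
  · rintro (h | ⟨h1, h2⟩)
    · left; exact h
    · right; omega
  · rintro (h | ⟨h1, h2⟩)
    · left; exact h
    · right; omega

@[simp] lemma mem_E_iff (hn : 7 ≤ n) {v : Fin n} {i j : ℕ} {hi hj} :
    v ∈ E hn i j hi hj ↔ ((v:ℕ) = i ∨ (v:ℕ) = j) := by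
  simp [E, Sym2.mem_iff, Fin.ext_iff, Vt]

@[simp] lemma mem_pendant_iff (hn : 7 ≤ n) {v x : Fin n} {h2 : (2:ℕ) < 7} :
    v ∈ s(Vt hn 2 h2, x) ↔ ((v:ℕ) = 2 ∨ (v:ℕ) = (x:ℕ)) := by
  simp [Sym2.mem_iff, Fin.ext_iff, Vt]

lemma mem_edgeSet' (hn : 7 ≤ n) {i j : ℕ} {hi : i < 7} {hj : j < 7}
    (h : (i = 0 ∧ j = 1) ∨ (i = 0 ∧ j = 2) ∨ (i = 1 ∧ j = 2) ∨ (i = 2 ∧ j = 3) ∨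
      (i = 3 ∧ j = 4) ∨ (i = 3 ∧ j = 5) ∨ (i = 4 ∧ j = 5)) :
    E hn i j hi hj ∈ (T33 n).edgeSet := by
  rw [E, SimpleGraph.mem_edgeSet, T33, SimpleGraph.fromRel_adj]
  refine ⟨by simp only [ne_eq, Fin.ext_iff, Vt_val]; omega, Or.inl ?_⟩
  simp only [Vt_val]
  rcases h with ⟨rfl, rfl⟩ | ⟨rfl, rfl⟩ | ⟨rfl, rfl⟩ | ⟨rfl, rfl⟩ | ⟨rfl, rfl⟩ |
    ⟨rfl, rfl⟩ | ⟨rfl, rfl⟩ <;> norm_num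

lemma pendant_mem_edgeSet (hn : 7 ≤ n) {x : Fin n} (hx : 6 ≤ (x : ℕ)) {h2 : (2:ℕ) < 7} :
    s(Vt hn 2 h2, x) ∈ (T33 n).edgeSet := by
  rw [SimpleGraph.mem_edgeSet, T33, SimpleGraph.fromRel_adj]
  refine ⟨by simp only [ne_eq, Fin.ext_iff, Vt_val]; omega, Or.inl ?_⟩
  simp only [Vt_val]
  norm_num
  omega

lemma fin_eq (hn : 7 ≤ n) {x : Fin n} {i : ℕ} (h : (x:ℕ) = i) (hi : i < 7) :
    x = Vt hn i hi := Fin.ext h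

lemma edge_cases (hn : 7 ≤ n) {e : Sym2 (Fin n)} (he : e ∈ (T33 n).edgeSet) :
    e = E hn 0 1 ∨ e = E hn 0 2 ∨ e = E hn 1 2 ∨ e = E hn 2 3 ∨
    e = E hn 3 4 ∨ e = E hn 3 5 ∨ e = E hn 4 5 ∨
    ∃ x : Fin n, 6 ≤ (x : ℕ) ∧ e = s(Vt hn 2, x) := by
  induction e using Sym2.ind with
  | _ x y =>
    rw [SimpleGraph.mem_edgeSet, T33, SimpleGraph.fromRel_adj] at he
    obtain ⟨hxy, h | h⟩ := he
    · rcases h with ⟨h1, h2⟩ | ⟨h1, h2⟩ | ⟨h1, h2⟩ | ⟨h1, h2⟩ | ⟨h1, h2⟩ | ⟨h1, h2⟩ |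
        ⟨h1, h2⟩ | ⟨h1, h2⟩
      · refine .inl ?_
        rw [fin_eq hn h1 (by norm_num), fin_eq hn h2 (by norm_num)]; rfl
      · refine .inr (.inl ?_)
        rw [fin_eq hn h1 (by norm_num), fin_eq hn h2 (by norm_num)]; rfl
      · refine .inr (.inr (.inl ?_))
        rw [fin_eq hn h1 (by norm_num), fin_eq hn h2 (by norm_num)]; rfl
      · refine .inr (.inr (.inr (.inl ?_)))
        rw [fin_eq hn h1 (by norm_num), fin_eq hn h2 (by norm_num)]; rfl
      · refine .inr (.inr (.inr (.inr (.inl ?_))))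
        rw [fin_eq hn h1 (by norm_num), fin_eq hn h2 (by norm_num)]; rfl
      · refine .inr (.inr (.inr (.inr (.inr (.inl ?_)))))
        rw [fin_eq hn h1 (by norm_num), fin_eq hn h2 (by norm_num)]; rfl
      · refine .inr (.inr (.inr (.inr (.inr (.inr (.inl ?_))))))
        rw [fin_eq hn h1 (by norm_num), fin_eq hn h2 (by norm_num)]; rfl
      · refine .inr (.inr (.inr (.inr (.inr (.inr (.inr ⟨y, h2, ?_⟩))))))
        rw [fin_eq hn h1 (by norm_num)]
    · rcases h with ⟨h1, h2⟩ | ⟨h1, h2⟩ | ⟨h1, h2⟩ | ⟨h1, h2⟩ | ⟨h1, h2⟩ | ⟨h1, h2⟩ |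
        ⟨h1, h2⟩ | ⟨h1, h2⟩
      · refine .inl ?_
        rw [fin_eq hn h2 (by norm_num), fin_eq hn h1 (by norm_num)]; exact Sym2.eq_swap
      · refine .inr (.inl ?_)
        rw [fin_eq hn h2 (by norm_num), fin_eq hn h1 (by norm_num)]; exact Sym2.eq_swap
      · refine .inr (.inr (.inl ?_))
        rw [fin_eq hn h2 (by norm_num), fin_eq hn h1 (by norm_num)]; exact Sym2.eq_swap
      · refine .inr (.inr (.inr (.inl ?_)))
        rw [fin_eq hn h2 (by norm_num), fin_eq hn h1 (by norm_num)]; exact Sym2.eq_swap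
      · refine .inr (.inr (.inr (.inr (.inl ?_))))
        rw [fin_eq hn h2 (by norm_num), fin_eq hn h1 (by norm_num)]; exact Sym2.eq_swap
      · refine .inr (.inr (.inr (.inr (.inr (.inl ?_)))))
        rw [fin_eq hn h2 (by norm_num), fin_eq hn h1 (by norm_num)]; exact Sym2.eq_swap
      · refine .inr (.inr (.inr (.inr (.inr (.inr (.inl ?_))))))
        rw [fin_eq hn h2 (by norm_num), fin_eq hn h1 (by norm_num)]; exact Sym2.eq_swap
      · refine .inr (.inr (.inr (.inr (.inr (.inr (.inr ⟨x, h2, ?_⟩))))))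
        rw [fin_eq hn h1 (by norm_num)]; exact Sym2.eq_swap

lemma mem_mm_iff {M : Finset (Sym2 (Fin n))} :
    M ∈ maximalMatchings (T33 n) ↔ IsMaximalMatching (T33 n) M := by
  rw [maximalMatchings, Finset.mem_filter, Finset.mem_powerset]
  refine ⟨And.right, fun h => ⟨fun e he => ?_, h⟩⟩
  exact SimpleGraph.mem_edgeFinset.mpr (h.1.1 (Finset.mem_coe.mpr he))

lemma maximal_of_covers {M : Finset (Sym2 (Fin n))} (hM : IsMatchingSet (T33 n) M)
    (hcov : ∀ e ∈ (T33 n).edgeSet, ∃ f ∈ M, ∃ v : Fin n, v ∈ e ∧ v ∈ f) :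
    IsMaximalMatching (T33 n) M := by
  refine ⟨hM, fun N hN hMN => ?_⟩
  refine Finset.Subset.antisymm (fun e he => ?_) hMN
  obtain ⟨f, hf, v, hve, hvf⟩ := hcov e (hN.1 (Finset.mem_coe.mpr he))
  by_contra heM
  have hne : e ≠ f := fun h => heM (h ▸ hf)
  exact hN.2 (Finset.mem_coe.mpr he) (Finset.mem_coe.mpr (hMN hf)) hne v ⟨hve, hvf⟩

lemma meets {M : Finset (Sym2 (Fin n))} (hM : IsMaximalMatching (T33 n) M)
    {e : Sym2 (Fin n)} (he : e ∈ (T33 n).edgeSet) :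
    ∃ f ∈ M, ∃ v : Fin n, v ∈ e ∧ v ∈ f := by
  by_contra hcon
  push_neg at hcon
  have hmm : IsMatchingSet (T33 n) (insert e M) := by
    constructor
    · intro f hf
      rw [Finset.coe_insert, Set.mem_insert_iff] at hf
      rcases hf with rfl | hf
      · exact he
      · exact hM.1.1 hf
    · rw [Finset.coe_insert, Set.pairwise_insert]
      refine ⟨hM.1.2, fun f hf hfe => ?_⟩
      constructor
      · intro v ⟨hv1, hv2⟩
        exact hcon f (Finset.mem_coe.mp hf) v hv1 hv2
      · intro v ⟨hv1, hv2⟩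
        exact hcon f (Finset.mem_coe.mp hf) v hv2 hv1
  have heq := hM.2 _ hmm (Finset.subset_insert e M)
  have heM : e ∈ M := heq ▸ Finset.mem_insert_self e M
  induction e using Sym2.ind with
  | _ x y => exact hcon _ heM x (Sym2.mem_mk_left x y) (Sym2.mem_mk_left x y)

lemma force {M : Finset (Sym2 (Fin n))} (hM : IsMatchingSet (T33 n) M)
    {e f : Sym2 (Fin n)} (he : e ∈ M) (hf : f ∈ M) (v : Fin n)
    (hv1 : v ∈ e) (hv2 : v ∈ f) : e = f := by
  by_contra h
  exact hM.2 (Finset.mem_coe.mpr he) (Finset.mem_coe.mpr hf) h v ⟨hv1, hv2⟩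

/-- the six maximal matchings of size 2 -/
def F2 (hn : 7 ≤ n) : Finset (Finset (Sym2 (Fin n))) :=
  { {E hn 0 2, E hn 3 4}, {E hn 0 2, E hn 3 5}, {E hn 0 2, E hn 4 5},
    {E hn 1 2, E hn 3 4}, {E hn 1 2, E hn 3 5}, {E hn 1 2, E hn 4 5} }

/-- the maximal matchings of size 3 -/
def F3 (hn : 7 ≤ n) : Finset (Finset (Sym2 (Fin n))) :=
  insert {E hn 2 3, E hn 0 1, E hn 4 5}
    ((Finset.univ.filter fun x : Fin n => 6 ≤ (x:ℕ)).biUnion fun x =>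
      { {s(Vt hn 2, x), E hn 0 1, E hn 3 4},
        {s(Vt hn 2, x), E hn 0 1, E hn 3 5},
        {s(Vt hn 2, x), E hn 0 1, E hn 4 5} })

lemma shared_E (hn : 7 ≤ n) {i j p q : ℕ} {hi hj hp hq}
    (h : i = p ∨ i = q ∨ j = p ∨ j = q) :
    ∃ v : Fin n, v ∈ E hn i j hi hj ∧ v ∈ E hn p q hp hq := by
  rcases h with h | h | h | h
  · exact ⟨Vt hn i hi, by simp, by simp [h]⟩
  · exact ⟨Vt hn i hi, by simp, by simp [h]⟩
  · exact ⟨Vt hn j hj, by simp, by simp [h]⟩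
  · exact ⟨Vt hn j hj, by simp, by simp [h]⟩

lemma shared_E_pendant (hn : 7 ≤ n) {x : Fin n} {i j : ℕ} {hi hj h2}
    (h : i = 2 ∨ j = 2) :
    ∃ v : Fin n, v ∈ E hn i j hi hj ∧ v ∈ s(Vt hn 2 h2, x) := by
  rcases h with h | h
  · exact ⟨Vt hn i hi, by simp, by simp [h]⟩
  · exact ⟨Vt hn j hj, by simp, by simp [h]⟩

lemma shared_pendant_E (hn : 7 ≤ n) {x : Fin n} {i j : ℕ} {hi hj h2}
    (h : i = 2 ∨ j = 2) :
    ∃ v : Fin n, v ∈ s(Vt hn 2 h2, x) ∧ v ∈ E hn i j hi hj := by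
  rcases h with h | h
  · exact ⟨Vt hn i hi, by simp [h], by simp⟩
  · exact ⟨Vt hn j hj, by simp [h], by simp⟩

lemma shared_pendant_pendant (hn : 7 ≤ n) {x y : Fin n} {h2} :
    ∃ v : Fin n, v ∈ s(Vt hn 2 h2, x) ∧ v ∈ s(Vt hn 2 h2, y) :=
  ⟨Vt hn 2 h2, by simp, by simp⟩

lemma maxA (hn : 7 ≤ n) {i p q : ℕ} {hi7 : i < 7} {hp7 : p < 7} {hq7 : q < 7}
    (hi : i = 0 ∨ i = 1)
    (hpq : (p = 3 ∧ q = 4) ∨ (p = 3 ∧ q = 5) ∨ (p = 4 ∧ q = 5)) :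
    IsMaximalMatching (T33 n) {E hn i 2 hi7 (by norm_num), E hn p q hp7 hq7} := by
  apply maximal_of_covers
  · constructor
    · intro e he
      simp only [Finset.coe_insert, Set.mem_insert_iff, Finset.coe_singleton,
        Set.mem_singleton_iff] at he
      rcases he with rfl | rfl <;> exact mem_edgeSet' hn (by omega)
    · intro a ha b hb hab
      simp only [Finset.coe_insert, Set.mem_insert_iff, Finset.coe_singleton,
        Set.mem_singleton_iff] at ha hb
      intro v hv
      rcases ha with rfl | rfl <;> rcases hb with rfl | rfl <;>
        first
          | exact hab rfl
          | (simp only [mem_E_iff] at hv; omega)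
  · intro e he
    rcases edge_cases hn he with rfl | rfl | rfl | rfl | rfl | rfl | rfl | ⟨x, hx, rfl⟩
    · exact ⟨E hn i 2 hi7 (by norm_num), by simp, shared_E hn (by omega)⟩
    · exact ⟨E hn i 2 hi7 (by norm_num), by simp, shared_E hn (by omega)⟩
    · exact ⟨E hn i 2 hi7 (by norm_num), by simp, shared_E hn (by omega)⟩
    · exact ⟨E hn i 2 hi7 (by norm_num), by simp, shared_E hn (by omega)⟩
    · exact ⟨E hn p q hp7 hq7, by simp, shared_E hn (by omega)⟩
    · exact ⟨E hn p q hp7 hq7, by simp, shared_E hn (by omega)⟩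
    · exact ⟨E hn p q hp7 hq7, by simp, shared_E hn (by omega)⟩
    · exact ⟨E hn i 2 hi7 (by norm_num), by simp, shared_pendant_E hn (by omega)⟩

lemma maxB (hn : 7 ≤ n) :
    IsMaximalMatching (T33 n) {E hn 2 3, E hn 0 1, E hn 4 5} := by
  apply maximal_of_covers
  · constructor
    · intro e he
      simp only [Finset.coe_insert, Set.mem_insert_iff, Finset.coe_singleton,
        Set.mem_singleton_iff] at he
      rcases he with rfl | rfl | rfl <;> exact mem_edgeSet' hn (by omega)
    · intro a ha b hb hab
      simp only [Finset.coe_insert, Set.mem_insert_iff, Finset.coe_singleton,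
        Set.mem_singleton_iff] at ha hb
      intro v hv
      rcases ha with rfl | rfl | rfl <;> rcases hb with rfl | rfl | rfl <;>
        first
          | exact hab rfl
          | (simp only [mem_E_iff] at hv; omega)
  · intro e he
    rcases edge_cases hn he with rfl | rfl | rfl | rfl | rfl | rfl | rfl | ⟨x, hx, rfl⟩
    · exact ⟨E hn 0 1, by simp, shared_E hn (by omega)⟩
    · exact ⟨E hn 0 1, by simp, shared_E hn (by omega)⟩
    · exact ⟨E hn 0 1, by simp, shared_E hn (by omega)⟩
    · exact ⟨E hn 2 3, by simp, shared_E hn (by omega)⟩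
    · exact ⟨E hn 2 3, by simp, shared_E hn (by omega)⟩
    · exact ⟨E hn 2 3, by simp, shared_E hn (by omega)⟩
    · exact ⟨E hn 4 5, by simp, shared_E hn (by omega)⟩
    · exact ⟨E hn 2 3, by simp, shared_pendant_E hn (by omega)⟩

lemma maxC (hn : 7 ≤ n) {x : Fin n} (hx : 6 ≤ (x:ℕ)) {p q : ℕ} {hp7 : p < 7} {hq7 : q < 7}
    (hpq : (p = 3 ∧ q = 4) ∨ (p = 3 ∧ q = 5) ∨ (p = 4 ∧ q = 5)) :
    IsMaximalMatching (T33 n) {s(Vt hn 2, x), E hn 0 1, E hn p q hp7 hq7} := by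
  apply maximal_of_covers
  · constructor
    · intro e he
      simp only [Finset.coe_insert, Set.mem_insert_iff, Finset.coe_singleton,
        Set.mem_singleton_iff] at he
      rcases he with rfl | rfl | rfl
      · exact pendant_mem_edgeSet hn hx
      · exact mem_edgeSet' hn (by omega)
      · exact mem_edgeSet' hn (by omega)
    · intro a ha b hb hab
      simp only [Finset.coe_insert, Set.mem_insert_iff, Finset.coe_singleton,
        Set.mem_singleton_iff] at ha hb
      intro v hv
      rcases ha with rfl | rfl | rfl <;> rcases hb with rfl | rfl | rfl <;>
        first
          | exact hab rfl
          | (simp only [mem_E_iff, mem_pendant_iff] at hv; omega)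
  · intro e he
    rcases edge_cases hn he with rfl | rfl | rfl | rfl | rfl | rfl | rfl | ⟨y, hy, rfl⟩
    · exact ⟨E hn 0 1, by simp, shared_E hn (by omega)⟩
    · exact ⟨E hn 0 1, by simp, shared_E hn (by omega)⟩
    · exact ⟨E hn 0 1, by simp, shared_E hn (by omega)⟩
    · exact ⟨s(Vt hn 2, x), by simp, shared_E_pendant hn (by omega)⟩
    · exact ⟨E hn p q hp7 hq7, by simp, shared_E hn (by omega)⟩
    · exact ⟨E hn p q hp7 hq7, by simp, shared_E hn (by omega)⟩
    · exact ⟨E hn p q hp7 hq7, by simp, shared_E hn (by omega)⟩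
    · exact ⟨s(Vt hn 2, x), by simp, shared_pendant_pendant hn⟩

lemma classify (hn : 7 ≤ n) {M : Finset (Sym2 (Fin n))}
    (hM : IsMaximalMatching (T33 n) M) : M ∈ F2 hn ∪ F3 hn := by
  have hcls : ∀ e ∈ M, e = E hn 0 1 ∨ e = E hn 0 2 ∨ e = E hn 1 2 ∨ e = E hn 2 3 ∨
      e = E hn 3 4 ∨ e = E hn 3 5 ∨ e = E hn 4 5 ∨
      ∃ x : Fin n, 6 ≤ (x : ℕ) ∧ e = s(Vt hn 2, x) :=
    fun e he => edge_cases hn (hM.1.1 (Finset.mem_coe.mpr he))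
  -- some edge of M contains vertex 2
  have step1 : ∃ f ∈ M, (Vt hn 2 : Fin n) ∈ f := by
    have hx6 : 6 ≤ (((⟨6, by omega⟩ : Fin n)) : ℕ) := le_refl 6
    obtain ⟨f, hf, v, hv1, hv2⟩ := meets hM
      (show (s(Vt hn 2, (⟨6, by omega⟩ : Fin n)) : Sym2 (Fin n)) ∈ (T33 n).edgeSet from
        pendant_mem_edgeSet hn hx6)
    rw [mem_pendant_iff] at hv1
    rcases hv1 with h2 | h6
    · have hv : v = Vt hn 2 := Fin.ext h2
      exact ⟨f, hf, hv ▸ hv2⟩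
    · rcases hcls f hf with rfl | rfl | rfl | rfl | rfl | rfl | rfl | ⟨x, hx, rfl⟩
      · simp only [mem_E_iff] at hv2; omega
      · simp only [mem_E_iff] at hv2; omega
      · simp only [mem_E_iff] at hv2; omega
      · simp only [mem_E_iff] at hv2; omega
      · simp only [mem_E_iff] at hv2; omega
      · simp only [mem_E_iff] at hv2; omega
      · simp only [mem_E_iff] at hv2; omega
      · exact ⟨s(Vt hn 2, x), hf, by simp⟩
  -- M contains an edge of the second triangle
  have step3 : ∃ t ∈ M, t = E hn 3 4 ∨ t = E hn 3 5 ∨ t = E hn 4 5 := by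
    obtain ⟨f, hf, v, hv1, hv2⟩ :=
      meets hM (show (E hn 4 5 : Sym2 (Fin n)) ∈ _ from mem_edgeSet' hn (by norm_num))
    rw [mem_E_iff] at hv1
    rcases hcls f hf with rfl | rfl | rfl | rfl | rfl | rfl | rfl | ⟨x, hx, rfl⟩
    · simp only [mem_E_iff] at hv2; omega
    · simp only [mem_E_iff] at hv2; omega
    · simp only [mem_E_iff] at hv2; omega
    · simp only [mem_E_iff] at hv2; omega
    · exact ⟨_, hf, Or.inl rfl⟩
    · exact ⟨_, hf, Or.inr (Or.inl rfl)⟩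
    · exact ⟨_, hf, Or.inr (Or.inr rfl)⟩
    · simp only [mem_pendant_iff] at hv2; omega
  -- M contains an edge of the first triangle
  have step4 : ∃ a ∈ M, a = E hn 0 1 ∨ a = E hn 0 2 ∨ a = E hn 1 2 := by
    obtain ⟨f, hf, v, hv1, hv2⟩ :=
      meets hM (show (E hn 0 1 : Sym2 (Fin n)) ∈ _ from mem_edgeSet' hn (by norm_num))
    rw [mem_E_iff] at hv1
    rcases hcls f hf with rfl | rfl | rfl | rfl | rfl | rfl | rfl | ⟨x, hx, rfl⟩
    · exact ⟨_, hf, Or.inl rfl⟩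
    · exact ⟨_, hf, Or.inr (Or.inl rfl)⟩
    · exact ⟨_, hf, Or.inr (Or.inr rfl)⟩
    · simp only [mem_E_iff] at hv2; omega
    · simp only [mem_E_iff] at hv2; omega
    · simp only [mem_E_iff] at hv2; omega
    · simp only [mem_E_iff] at hv2; omega
    · simp only [mem_pendant_iff] at hv2; omega
  obtain ⟨f2, hf2, hf2v⟩ := step1
  obtain ⟨t, htM, ht⟩ := step3
  obtain ⟨a, haM, ha⟩ := step4
  have gtri : ∀ g ∈ M, (g = E hn 3 4 ∨ g = E hn 3 5 ∨ g = E hn 4 5) → g = t := by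
    intro g hg hgc
    rcases hgc with rfl | rfl | rfl <;> rcases ht with rfl | rfl | rfl
    · rfl
    · have := force hM.1 hg htM (Vt hn 3) (by simp) (by simp); simp at this
    · have := force hM.1 hg htM (Vt hn 4) (by simp) (by simp); simp at this
    · have := force hM.1 hg htM (Vt hn 3) (by simp) (by simp); simp at this
    · rfl
    · have := force hM.1 hg htM (Vt hn 5) (by simp) (by simp); simp at this
    · have := force hM.1 hg htM (Vt hn 4) (by simp) (by simp); simp at this
    · have := force hM.1 hg htM (Vt hn 5) (by simp) (by simp); simp at this
    · rfl
  rcases hcls f2 hf2 with rfl | rfl | rfl | rfl | rfl | rfl | rfl | ⟨x, hx, rfl⟩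
  · simp at hf2v
  -- Case f2 = E 0 2
  · have hMeq : M = {E hn 0 2, t} := by
      ext g
      simp only [Finset.mem_insert, Finset.mem_singleton]
      constructor
      · intro hg
        rcases hcls g hg with rfl | rfl | rfl | rfl | h45 | h45 | h45 | ⟨y, hy, rfl⟩
        · have := force hM.1 hg hf2 (Vt hn 0) (by simp) (by simp); simp at this
        · exact Or.inl rfl
        · have := force hM.1 hg hf2 (Vt hn 2) (by simp) (by simp); simp at this
        · have := force hM.1 hg hf2 (Vt hn 2) (by simp) (by simp); simp at this
        · exact Or.inr (gtri g hg (Or.inl h45))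
        · exact Or.inr (gtri g hg (Or.inr (Or.inl h45)))
        · exact Or.inr (gtri g hg (Or.inr (Or.inr h45)))
        · have := force hM.1 hg hf2 (Vt hn 2) (by simp) (by simp)
          simp at this; omega
      · rintro (rfl | rfl)
        · exact hf2
        · exact htM
    rw [hMeq]
    apply Finset.mem_union_left
    rcases ht with rfl | rfl | rfl <;> simp [F2]
  -- Case f2 = E 1 2
  · have hMeq : M = {E hn 1 2, t} := by
      ext g
      simp only [Finset.mem_insert, Finset.mem_singleton]
      constructor
      · intro hg
        rcases hcls g hg with rfl | rfl | rfl | rfl | h45 | h45 | h45 | ⟨y, hy, rfl⟩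
        · have := force hM.1 hg hf2 (Vt hn 1) (by simp) (by simp); simp at this
        · have := force hM.1 hg hf2 (Vt hn 2) (by simp) (by simp); simp at this
        · exact Or.inl rfl
        · have := force hM.1 hg hf2 (Vt hn 2) (by simp) (by simp); simp at this
        · exact Or.inr (gtri g hg (Or.inl h45))
        · exact Or.inr (gtri g hg (Or.inr (Or.inl h45)))
        · exact Or.inr (gtri g hg (Or.inr (Or.inr h45)))
        · have := force hM.1 hg hf2 (Vt hn 2) (by simp) (by simp)
          simp at this; omega
      · rintro (rfl | rfl)
        · exact hf2
        · exact htM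
    rw [hMeq]
    apply Finset.mem_union_left
    rcases ht with rfl | rfl | rfl <;> simp [F2]
  -- Case f2 = E 2 3
  · have ha1 : a = E hn 0 1 := by
      rcases ha with rfl | rfl | rfl
      · rfl
      · have := force hM.1 haM hf2 (Vt hn 2) (by simp) (by simp); simp at this
      · have := force hM.1 haM hf2 (Vt hn 2) (by simp) (by simp); simp at this
    subst ha1
    have ht1 : t = E hn 4 5 := by
      rcases ht with rfl | rfl | rfl
      · have := force hM.1 htM hf2 (Vt hn 3) (by simp) (by simp); simp at this
      · have := force hM.1 htM hf2 (Vt hn 3) (by simp) (by simp); simp at this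
      · rfl
    subst ht1
    have hMeq : M = {E hn 2 3, E hn 0 1, E hn 4 5} := by
      ext g
      simp only [Finset.mem_insert, Finset.mem_singleton]
      constructor
      · intro hg
        rcases hcls g hg with rfl | rfl | rfl | rfl | rfl | rfl | rfl | ⟨y, hy, rfl⟩
        · exact Or.inr (Or.inl rfl)
        · have := force hM.1 hg haM (Vt hn 0) (by simp) (by simp); simp at this
        · have := force hM.1 hg haM (Vt hn 1) (by simp) (by simp); simp at this
        · exact Or.inl rfl
        · have := force hM.1 hg hf2 (Vt hn 3) (by simp) (by simp); simp at this
        · have := force hM.1 hg hf2 (Vt hn 3) (by simp) (by simp); simp at this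
        · exact Or.inr (Or.inr rfl)
        · have := force hM.1 hg hf2 (Vt hn 2) (by simp) (by simp)
          simp at this; omega
      · rintro (rfl | rfl | rfl)
        · exact hf2
        · exact haM
        · exact htM
    rw [hMeq]
    apply Finset.mem_union_right
    simp [F3]
  · simp at hf2v
  · simp at hf2v
  · simp at hf2v
  -- Case f2 = pendant
  · have ha1 : a = E hn 0 1 := by
      rcases ha with rfl | rfl | rfl
      · rfl
      · have := force hM.1 haM hf2 (Vt hn 2) (by simp) (by simp)
        simp at this; omega
      · have := force hM.1 haM hf2 (Vt hn 2) (by simp) (by simp)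
        simp at this; omega
    subst ha1
    have hMeq : M = {s(Vt hn 2, x), E hn 0 1, t} := by
      ext g
      simp only [Finset.mem_insert, Finset.mem_singleton]
      constructor
      · intro hg
        rcases hcls g hg with rfl | rfl | rfl | rfl | h45 | h45 | h45 | ⟨y, hy, rfl⟩
        · exact Or.inr (Or.inl rfl)
        · have := force hM.1 hg haM (Vt hn 0) (by simp) (by simp); simp at this
        · have := force hM.1 hg haM (Vt hn 1) (by simp) (by simp); simp at this
        · have := force hM.1 hg hf2 (Vt hn 2) (by simp) (by simp)
          simp at this; omega
        · exact Or.inr (Or.inr (gtri g hg (Or.inl h45)))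
        · exact Or.inr (Or.inr (gtri g hg (Or.inr (Or.inl h45))))
        · exact Or.inr (Or.inr (gtri g hg (Or.inr (Or.inr h45))))
        · have := force hM.1 hg hf2 (Vt hn 2) (by simp) (by simp)
          have hyx : y = x := by
            simp only [pendant_eq_pendant] at this
            exact Fin.ext (by omega)
          exact Or.inl (by rw [hyx])
      · rintro (rfl | rfl | rfl)
        · exact hf2
        · exact haM
        · exact htM
    rw [hMeq]
    apply Finset.mem_union_right
    rw [F3]
    apply Finset.mem_insert_of_mem
    rw [Finset.mem_biUnion]
    refine ⟨x, by simp [hx], ?_⟩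
    rcases ht with rfl | rfl | rfl <;> simp

lemma set_ne_of_witness {α : Type*} {s t : Finset α} {x : α} (hx : x ∈ s) (hx' : x ∉ t) :
    s ≠ t := fun h => hx' (h ▸ hx)

@[simp] lemma finset_pair_eq_pair {a b c d : Sym2 (Fin n)} :
    (({a, b} : Finset (Sym2 (Fin n))) = {c, d}) ↔ (a = c ∧ b = d) ∨ (a = d ∧ b = c) := by
  rw [← Finset.coe_inj]
  simp only [Finset.coe_insert, Finset.coe_singleton]
  exact Set.pair_eq_pair_iff

lemma mm_eq (hn : 7 ≤ n) : maximalMatchings (T33 n) = F2 hn ∪ F3 hn := by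
  ext M
  rw [mem_mm_iff, Finset.mem_union]
  constructor
  · intro h
    have := classify hn h
    rwa [Finset.mem_union] at this
  · intro h
    rcases h with h | h
    · simp only [F2, Finset.mem_insert, Finset.mem_singleton] at h
      rcases h with rfl | rfl | rfl | rfl | rfl | rfl <;>
        exact maxA hn (by norm_num) (by norm_num)
    · simp only [F3, Finset.mem_insert, Finset.mem_biUnion, Finset.mem_filter,
        Finset.mem_singleton] at h
      rcases h with rfl | ⟨x, ⟨-, hx⟩, rfl | rfl | rfl⟩
      · exact maxB hn
      · exact maxC hn hx (by norm_num)
      · exact maxC hn hx (by norm_num)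
      · exact maxC hn hx (by norm_num)

lemma card_F2_mem (hn : 7 ≤ n) {M : Finset (Sym2 (Fin n))} (h : M ∈ F2 hn) : M.card = 2 := by
  simp only [F2, Finset.mem_insert, Finset.mem_singleton] at h
  rcases h with rfl | rfl | rfl | rfl | rfl | rfl <;> exact Finset.card_pair (by simp)

lemma card_F3_mem (hn : 7 ≤ n) {M : Finset (Sym2 (Fin n))} (h : M ∈ F3 hn) : M.card = 3 := by
  simp only [F3, Finset.mem_insert, Finset.mem_biUnion, Finset.mem_filter,
    Finset.mem_singleton] at h
  rcases h with rfl | ⟨x, ⟨-, hx⟩, rfl | rfl | rfl⟩ <;>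
  · rw [Finset.card_insert_of_notMem, Finset.card_pair]
    · simp
    · simp only [Finset.mem_insert, Finset.mem_singleton, not_or]
      constructor <;> simp <;> omega

lemma F2_card (hn : 7 ≤ n) : (F2 hn).card = 6 := by
  rw [F2]
  rw [Finset.card_insert_of_notMem (by simp),
    Finset.card_insert_of_notMem (by simp),
    Finset.card_insert_of_notMem (by simp),
    Finset.card_insert_of_notMem (by simp),
    Finset.card_insert_of_notMem (by simp),
    Finset.card_singleton]

lemma leaves_card (hn : 7 ≤ n) :
    (Finset.univ.filter fun x : Fin n => 6 ≤ (x:ℕ)).card = n - 6 := by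
  rw [← Nat.card_Ico 6 n]
  apply Finset.card_bij (fun (x : Fin n) _ => (x : ℕ))
  · intro a ha
    simp only [Finset.mem_filter, Finset.mem_univ, true_and] at ha
    simp [Finset.mem_Ico, ha, a.2]
  · intro a _ b _ hab
    exact Fin.ext hab
  · intro b hb
    rw [Finset.mem_Ico] at hb
    exact ⟨⟨b, hb.2⟩, by simp [hb.1], rfl⟩

lemma F3_card (hn : 7 ≤ n) : (F3 hn).card = 3 * (n - 6) + 1 := by
  have hinner : ∀ x : Fin n, 6 ≤ (x:ℕ) →
      ({ {s(Vt hn 2, x), E hn 0 1, E hn 3 4}, {s(Vt hn 2, x), E hn 0 1, E hn 3 5},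
         {s(Vt hn 2, x), E hn 0 1, E hn 4 5} } :
        Finset (Finset (Sym2 (Fin n)))).card = 3 := by
    intro x hx
    rw [Finset.card_insert_of_notMem, Finset.card_pair]
    · exact set_ne_of_witness
        (show (E hn 3 5 : Sym2 (Fin n)) ∈ ({s(Vt hn 2, x), E hn 0 1, E hn 3 5} :
            Finset (Sym2 (Fin n))) from by simp)
        (by simp only [Finset.mem_insert, Finset.mem_singleton, E_eq_pendant, E_eq_E,
              not_or]
            omega)
    · simp only [Finset.mem_insert, Finset.mem_singleton, not_or]
      constructor <;>
        exact set_ne_of_witness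
          (show (E hn 3 4 : Sym2 (Fin n)) ∈ ({s(Vt hn 2, x), E hn 0 1, E hn 3 4} :
              Finset (Sym2 (Fin n))) from by simp)
          (by simp only [Finset.mem_insert, Finset.mem_singleton, E_eq_pendant, E_eq_E,
                not_or]
              omega)
  rw [F3]
  rw [Finset.card_insert_of_notMem]
  · rw [Finset.card_biUnion]
    · rw [Finset.sum_const_nat (m := 3) (fun x hx => hinner x (by simpa using hx)),
        leaves_card hn]
      omega
    · intro x hx y hy hxy
      simp only [Finset.mem_coe, Finset.mem_filter, Finset.mem_univ, true_and] at hx hy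
      rw [Function.onFun, Finset.disjoint_left]
      intro M hMx hMy
      have hsx : s(Vt hn 2, x) ∈ M := by
        simp only [Finset.mem_insert, Finset.mem_singleton] at hMx
        rcases hMx with rfl | rfl | rfl <;> simp
      simp only [Finset.mem_insert, Finset.mem_singleton] at hMy
      have : s(Vt hn 2, x) ∈ ({s(Vt hn 2, y), E hn 0 1, E hn 3 4} : Finset (Sym2 (Fin n))) ∨
          s(Vt hn 2, x) ∈ ({s(Vt hn 2, y), E hn 0 1, E hn 3 5} : Finset (Sym2 (Fin n))) ∨
          s(Vt hn 2, x) ∈ ({s(Vt hn 2, y), E hn 0 1, E hn 4 5} : Finset (Sym2 (Fin n))) := by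
        rcases hMy with rfl | rfl | rfl
        · exact Or.inl hsx
        · exact Or.inr (Or.inl hsx)
        · exact Or.inr (Or.inr hsx)
      have hxy' : (x : ℕ) ≠ (y : ℕ) := fun hh => hxy (Fin.ext hh)
      rcases this with h | h | h <;>
      · simp only [Finset.mem_insert, Finset.mem_singleton, pendant_eq_pendant,
          pendant_eq_E] at h
        omega
  · rw [Finset.mem_biUnion]
    rintro ⟨x, hx, h⟩
    simp only [Finset.mem_filter, Finset.mem_univ, true_and] at hx
    have he : (E hn 2 3 : Sym2 (Fin n)) ∈
        ({E hn 2 3, E hn 0 1, E hn 4 5} : Finset (Sym2 (Fin n))) := by simp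
    simp only [Finset.mem_insert, Finset.mem_singleton] at h
    rcases h with h | h | h <;>
    · rw [h] at he
      simp only [Finset.mem_insert, Finset.mem_singleton, E_eq_pendant, E_eq_E] at he
      omega

lemma filter2_eq (hn : 7 ≤ n) :
    ((maximalMatchings (T33 n)).filter fun M => M.card = 2) = F2 hn := by
  rw [mm_eq hn]
  ext M
  simp only [Finset.mem_filter, Finset.mem_union]
  constructor
  · rintro ⟨h | h, hc⟩
    · exact h
    · have := card_F3_mem hn h; omega
  · intro h
    exact ⟨Or.inl h, card_F2_mem hn h⟩

lemma filter3_eq (hn : 7 ≤ n) :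
    ((maximalMatchings (T33 n)).filter fun M => M.card = 3) = F3 hn := by
  rw [mm_eq hn]
  ext M
  simp only [Finset.mem_filter, Finset.mem_union]
  constructor
  · rintro ⟨h | h, hc⟩
    · have := card_F2_mem hn h; omega
    · exact h
  · intro h
    exact ⟨Or.inr h, card_F3_mem hn h⟩

end T33Aux

open T33Aux in
theorem stmt12 (n : ℕ) (hn : 7 ≤ n) :
    ((maximalMatchings (T33 n)).filter fun M => M.card = 2).card = 6 ∧
    ((maximalMatchings (T33 n)).filter fun M => M.card = 3).card = 3 * (n - 6) + 1 ∧
    (∀ M ∈ maximalMatchings (T33 n), M.card = 2 ∨ M.card = 3) ∧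
    avm (T33 n) = (9 * (n : ℚ) - 39) / (3 * (n : ℚ) - 11) ∧
    avm (T33 n) = 3 - 6 / (3 * (n : ℚ) - 11) := by
  have h6 : 6 ≤ n := by omega
  have hc2 : ((maximalMatchings (T33 n)).filter fun M => M.card = 2).card = 6 := by
    rw [filter2_eq hn, F2_card hn]
  have hc3 : ((maximalMatchings (T33 n)).filter fun M => M.card = 3).card = 3 * (n - 6) + 1 := by
    rw [filter3_eq hn, F3_card hn]
  have hall : ∀ M ∈ maximalMatchings (T33 n), M.card = 2 ∨ M.card = 3 := by
    intro M hM
    rw [mm_eq hn, Finset.mem_union] at hM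
    rcases hM with h | h
    · exact Or.inl (card_F2_mem hn h)
    · exact Or.inr (card_F3_mem hn h)
  have hfneg : ((maximalMatchings (T33 n)).filter fun M => ¬ M.card = 2)
      = ((maximalMatchings (T33 n)).filter fun M => M.card = 3) := by
    apply Finset.filter_congr
    intro M hM
    rcases hall M hM with h | h <;> simp [h]
  have htot : (maximalMatchings (T33 n)).card = 3 * (n - 6) + 7 := by
    have hh := Finset.card_filter_add_card_filter_not
      (s := maximalMatchings (T33 n)) (p := fun M => M.card = 2)
    rw [hfneg, hc2, hc3] at hh
    omega
  have hsum : ∑ M ∈ maximalMatchings (T33 n), (M.card : ℚ) = 9 * (n:ℚ) - 39 := by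
    have hsplit := Finset.sum_filter_add_sum_filter_not (maximalMatchings (T33 n))
      (fun M => M.card = 2) (fun M => (M.card : ℚ))
    rw [hfneg] at hsplit
    rw [← hsplit]
    have e1 : ∀ M ∈ ((maximalMatchings (T33 n)).filter fun M => M.card = 2),
        (M.card : ℚ) = 2 := by
      intro M hM
      rw [(Finset.mem_filter.mp hM).2]; norm_num
    have e2 : ∀ M ∈ ((maximalMatchings (T33 n)).filter fun M => M.card = 3),
        (M.card : ℚ) = 3 := by
      intro M hM
      rw [(Finset.mem_filter.mp hM).2]; norm_num
    rw [Finset.sum_congr rfl e1, Finset.sum_congr rfl e2, Finset.sum_const,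
      Finset.sum_const, hc2, hc3, nsmul_eq_mul, nsmul_eq_mul]
    push_cast [h6]
    ring
  have hd : ((maximalMatchings (T33 n)).card : ℚ) = 3 * (n:ℚ) - 11 := by
    rw [htot]
    push_cast [h6]
    ring
  have havm : avm (T33 n) = (9 * (n : ℚ) - 39) / (3 * (n : ℚ) - 11) := by
    rw [avm, hsum, hd]
  have hne : (3 * (n : ℚ) - 11) ≠ 0 := by
    have h7 : (7:ℚ) ≤ (n:ℚ) := by exact_mod_cast hn
    intro h
    linarith
  refine ⟨hc2, hc3, hall, havm, ?_⟩
  rw [havm]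
  rw [eq_sub_iff_add_eq, ← add_div, div_eq_iff hne]
  ring
end
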